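/- arXiv:2203.06065 — 6 statements merged into one kernel-verified Lean document; each statement's English description precedes it below -/
import Mathlib

section
/- (Lemma 2, part 1: regret bound of the virtual-queue algorithm.) Let x* ∈ X₀ be any fixed point satisfying g_i(x*) ≤ 0 for all i = 1,…,m. Let η > 0 be arbitrary. If the algorithm parameter satisfies α ≥ (1/2)(γ²β² + η), then for all T ≥ 1 the iterates x(1),…,x(T) of the virtual-queue online algorithm satisfy Σ_{t=1}^T f^t(x(t)) ≤ Σ_{t=1}^T f^t(x*) + α‖x* − x(1)‖² + T/(2η). -/
open RealInnerProductSpace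

lemma combo_norm_sq {E : Type*} [NormedAddCommGroup E] [InnerProductSpace ℝ E]
    (p q : E) (l : ℝ) :
    ‖(1 - l) • p + l • q‖ ^ 2
      = (1 - l) * ‖p‖ ^ 2 + l * ‖q‖ ^ 2 - l * (1 - l) * ‖q - p‖ ^ 2 := by
  simp only [← real_inner_self_eq_norm_sq, inner_add_left, inner_add_right,
    inner_sub_left, inner_sub_right, real_inner_smul_left, real_inner_smul_right]
  rw [real_inner_comm q p]
  ring

lemma convex_grad_ineq {E : Type*} [NormedAddCommGroup E] [InnerProductSpace ℝ E]
    [CompleteSpace E] {f : E → ℝ} {d a : E}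
    (hf : ConvexOn ℝ Set.univ f) (hd : HasGradientAt f d a) (b : E) :
    f a + ⟪d, b - a⟫ ≤ f b := by
  set v := b - a with hv
  have hline : HasDerivAt (fun s : ℝ => a + s • v) v 0 := by
    simpa using ((hasDerivAt_id (0 : ℝ)).smul_const v).const_add a
  have hphi : HasDerivAt (fun s : ℝ => f (a + s • v)) ⟪d, v⟫ 0 := by
    have h1 : HasFDerivAt f (InnerProductSpace.toDual ℝ E d) a := hd.hasFDerivAt
    have h2 : HasFDerivAt f (InnerProductSpace.toDual ℝ E d) ((fun s : ℝ => a + s • v) 0) := by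
      simpa using h1
    have := h2.comp_hasDerivAt 0 hline
    simp at this
    exact this
  have hslope : Filter.Tendsto (slope (fun s : ℝ => f (a + s • v)) 0)
      (nhdsWithin 0 (Set.Ioi 0)) (nhds ⟪d, v⟫) :=
    (hasDerivAt_iff_tendsto_slope.mp hphi).mono_left
      (nhdsWithin_mono 0 (fun s hs => Set.mem_compl_singleton_iff.mpr (ne_of_gt hs)))
  have hbound : ∀ᶠ s in nhdsWithin (0:ℝ) (Set.Ioi 0),
      slope (fun s : ℝ => f (a + s • v)) 0 s ≤ f b - f a := by
    filter_upwards [Ioc_mem_nhdsGT_of_mem (Set.mem_Ico.mpr ⟨le_refl (0:ℝ), zero_lt_one⟩)] with s hs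
    obtain ⟨hs0, hs1⟩ := hs
    have hcomb : f (a + s • v) ≤ (1 - s) * f a + s * f b := by
      have h2 := hf.2 (Set.mem_univ a) (Set.mem_univ b)
        (by linarith : (0:ℝ) ≤ 1 - s) (le_of_lt hs0) (by ring)
      simp only [smul_eq_mul] at h2
      have heq : a + s • v = (1 - s) • a + s • b := by rw [hv]; module
      rw [heq]; exact h2
    rw [slope_def_field]
    simp only [zero_smul, add_zero, sub_zero]
    rw [div_le_iff₀ hs0]
    nlinarith [hcomb]
  have hle := le_of_tendsto hslope hbound
  linarith

lemma drift_coord (Qo Qn a b : ℝ) (h : Qn = max (-b) (Qo + b)) :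
    Qn^2/2 - b^2/2 - (Qo^2/2 - a^2/2) ≤ (Qo + a) * b + (b - a)^2/2 := by
  rcases max_choice (-b) (Qo + b) with hc | hc <;> rw [hc] at h <;> subst h <;>
    nlinarith [sq_nonneg (Qo + b), sq_nonneg b]

lemma telescope_icc (G : ℕ → ℝ) (T : ℕ) :
    ∑ t ∈ Finset.Icc 1 T, (G t - G (t+1)) = G 1 - G (T+1) := by
  induction T with
  | zero => simp
  | succ k ih => rw [Finset.sum_Icc_succ_top (by omega), ih]; ring

set_option maxHeartbeats 1600000

/-- Lemma 2, part 1 (regret bound of the virtual-queue online algorithm):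
if `α ≥ (1/2)(γ²β² + η)`, then for any fixed feasible `x* ∈ X₀` (i.e. with
`g_i(x*) ≤ 0` for all `i`) the iterates satisfy
`Σ_{t=1}^T f^t(x(t)) ≤ Σ_{t=1}^T f^t(x*) + α‖x* − x(1)‖² + T/(2η)`. -/
theorem stmt2 {n m : ℕ}
    (X₀ : Set (EuclideanSpace ℝ (Fin n))) (hne : X₀.Nonempty)
    (hcomp : IsCompact X₀) (hconv : Convex ℝ X₀)
    (G₁ G₂ β γ ε α η : ℝ) (hG₁ : 0 < G₁)
    (hdiam : ∀ x ∈ X₀, ∀ y ∈ X₀, ‖x - y‖ ≤ G₁)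
    (T : ℕ) (hT : 1 ≤ T)
    (f : ℕ → EuclideanSpace ℝ (Fin n) → ℝ)
    (fgrad : ℕ → EuclideanSpace ℝ (Fin n) → EuclideanSpace ℝ (Fin n))
    (hfconv : ∀ t ∈ Finset.Icc 1 T, ConvexOn ℝ Set.univ (f t))
    (hfgrad : ∀ t ∈ Finset.Icc 1 T, ∀ x, HasGradientAt (f t) (fgrad t x) x)
    (hfgradbd : ∀ t ∈ Finset.Icc 1 T, ∀ x ∈ X₀, ‖fgrad t x‖ ≤ 1)
    (g : EuclideanSpace ℝ (Fin n) → EuclideanSpace ℝ (Fin m))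
    (hgconv : ∀ i, ConvexOn ℝ Set.univ (fun x => g x i))
    (hgbd : ∀ x ∈ X₀, ‖g x‖ ≤ G₂)
    (hglip : ∀ x ∈ X₀, ∀ y ∈ X₀, ‖g x - g y‖ ≤ β * ‖x - y‖)
    (hγ : 0 < γ) (hε : 0 < ε)
    (xhat : EuclideanSpace ℝ (Fin n)) (hxhat : xhat ∈ X₀)
    (hslater : ∀ i, g xhat i ≤ -ε)
    (hη : 0 < η) (hα : (1 / 2) * (γ ^ 2 * β ^ 2 + η) ≤ α)
    -- the virtual-queue online algorithm
    (x : ℕ → EuclideanSpace ℝ (Fin n))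
    (Q : ℕ → Fin m → ℝ)
    (hx1 : x 1 ∈ X₀)
    (hQ0 : ∀ i, Q 0 i = 0)
    (hQ : ∀ t, 1 ≤ t → ∀ i,
      Q t i = max (-(γ * g (x t) i)) (Q (t - 1) i + γ * g (x t) i))
    (hxupd : ∀ t, 1 ≤ t → x (t + 1) ∈ X₀ ∧
      ∀ z ∈ X₀,
        ⟪fgrad t (x t), x (t + 1) - x t⟫
            + (∑ i, (Q t i + γ * g (x t) i) * (γ * g (x (t + 1)) i))
            + α * ‖x (t + 1) - x t‖ ^ 2 ≤
          ⟪fgrad t (x t), z - x t⟫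
            + (∑ i, (Q t i + γ * g (x t) i) * (γ * g z i))
            + α * ‖z - x t‖ ^ 2)
    -- any fixed feasible point
    (xs : EuclideanSpace ℝ (Fin n)) (hxs : xs ∈ X₀)
    (hfeas : ∀ i, g xs i ≤ 0) :
    ∑ t ∈ Finset.Icc 1 T, f t (x t) ≤
      ∑ t ∈ Finset.Icc 1 T, f t xs + α * ‖xs - x 1‖ ^ 2 + T / (2 * η) := by
  have hαpos : 0 < α := by nlinarith [sq_nonneg (γ * β)]
  -- iterates stay in X₀
  have hxX : ∀ t, 1 ≤ t → x t ∈ X₀ := by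
    intro t
    induction t with
    | zero => intro h; omega
    | succ k ih =>
      intro _
      rcases Nat.eq_zero_or_pos k with hk | hk
      · subst hk; exact hx1
      · exact (hxupd k hk).1
  -- queues are nonnegative
  have hQnn : ∀ t, ∀ i, 0 ≤ Q t i := by
    intro t
    induction t with
    | zero => intro i; rw [hQ0 i]
    | succ k ih =>
      intro i
      rw [hQ (k+1) (by omega) i]
      simp only [Nat.add_sub_cancel]
      rcases le_total 0 (γ * g (x (k+1)) i) with h | h
      · exact le_trans (by linarith [ih i]) (le_max_right _ _)
      · exact le_trans (by linarith) (le_max_left _ _)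
  have hQv : ∀ t, 1 ≤ t → ∀ i,
      -(γ * g (x t) i) ≤ Q t i ∧ γ * g (x t) i ≤ Q t i := by
    intro t ht i
    rw [hQ t ht i]
    refine ⟨le_max_left _ _, ?_⟩
    have := hQnn (t-1) i
    exact le_trans (by linarith) (le_max_right _ _)
  -- the potential
  set L : ℕ → ℝ :=
    fun s => (∑ i, (Q s i)^2)/2 - (∑ i, (γ * g (x s) i)^2)/2 with hLdef
  clear_value L
  have hL1 : L 1 = 0 := by
    have hq1 : ∀ i, (Q 1 i)^2 = (γ * g (x 1) i)^2 := by
      intro i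
      rw [hQ 1 le_rfl i]
      norm_num [hQ0]
      rcases max_choice (-(γ * g (x 1) i)) (γ * g (x 1) i) with h | h <;> rw [h] <;> ring
    simp only [hLdef]
    rw [Finset.sum_congr rfl (fun i _ => hq1 i)]
    ring
  have hLnn : ∀ t, 1 ≤ t → 0 ≤ L t := by
    intro t ht
    have hsum : ∑ i, (γ * g (x t) i)^2 ≤ ∑ i, (Q t i)^2 :=
      Finset.sum_le_sum (fun i _ => by nlinarith [(hQv t ht i).1, (hQv t ht i).2])
    simp only [hLdef]
    linarith
  -- drift bound
  have hdrift : ∀ t, 1 ≤ t → L (t+1) - L t ≤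
      (∑ i, (Q t i + γ * g (x t) i) * (γ * g (x (t+1)) i))
        + (∑ i, (γ * g (x (t+1)) i - γ * g (x t) i)^2)/2 := by
    intro t ht
    have hper : ∀ i, (Q (t+1) i)^2/2 - (γ * g (x (t+1)) i)^2/2
        - ((Q t i)^2/2 - (γ * g (x t) i)^2/2)
        ≤ (Q t i + γ * g (x t) i) * (γ * g (x (t+1)) i)
          + (γ * g (x (t+1)) i - γ * g (x t) i)^2/2 := by
      intro i
      have h := hQ (t+1) (by omega) i
      simp only [Nat.add_sub_cancel] at h
      exact drift_coord (Q t i) (Q (t+1) i) (γ * g (x t) i) (γ * g (x (t+1)) i) h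
    have hsum := Finset.sum_le_sum (fun i (_ : i ∈ Finset.univ) => hper i)
    have e1 : ∑ i, ((Q (t+1) i)^2/2 - (γ * g (x (t+1)) i)^2/2
        - ((Q t i)^2/2 - (γ * g (x t) i)^2/2)) = L (t+1) - L t := by
      simp only [hLdef, Finset.sum_sub_distrib, ← Finset.sum_div]
    have e2 : ∑ i, ((Q t i + γ * g (x t) i) * (γ * g (x (t+1)) i)
        + (γ * g (x (t+1)) i - γ * g (x t) i)^2/2)
        = (∑ i, (Q t i + γ * g (x t) i) * (γ * g (x (t+1)) i))
          + (∑ i, (γ * g (x (t+1)) i - γ * g (x t) i)^2)/2 := by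
      simp only [Finset.sum_add_distrib, ← Finset.sum_div]
    rw [e1, e2] at hsum
    exact hsum
  -- Lipschitz bound
  have hlip2 : ∀ t, 1 ≤ t →
      ∑ i, (γ * g (x (t+1)) i - γ * g (x t) i)^2 ≤ γ^2 * β^2 * ‖x (t+1) - x t‖^2 := by
    intro t ht
    have h1 : ‖g (x (t+1)) - g (x t)‖ ≤ β * ‖x (t+1) - x t‖ :=
      hglip _ (hxX (t+1) (by omega)) _ (hxX t ht)
    have h2 : ‖g (x (t+1)) - g (x t)‖^2 ≤ (β * ‖x (t+1) - x t‖)^2 :=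
      pow_le_pow_left₀ (norm_nonneg _) h1 2
    have h3 : ‖g (x (t+1)) - g (x t)‖^2 = ∑ i, (g (x (t+1)) i - g (x t) i)^2 := by
      rw [EuclideanSpace.norm_eq, Real.sq_sqrt (by positivity)]
      simp [PiLp.sub_apply, sq_abs]
    calc ∑ i, (γ * g (x (t+1)) i - γ * g (x t) i)^2
        = γ^2 * ∑ i, (g (x (t+1)) i - g (x t) i)^2 := by
          rw [Finset.mul_sum]
          exact Finset.sum_congr rfl (fun i _ => by ring)
      _ = γ^2 * ‖g (x (t+1)) - g (x t)‖^2 := by rw [h3]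
      _ ≤ γ^2 * (β * ‖x (t+1) - x t‖)^2 := mul_le_mul_of_nonneg_left h2 (sq_nonneg γ)
      _ = γ^2 * β^2 * ‖x (t+1) - x t‖^2 := by ring
  -- strong convexity of the per-round subproblem
  have hstrong : ∀ t, 1 ≤ t →
      ⟪fgrad t (x t), x (t + 1) - x t⟫
        + (∑ i, (Q t i + γ * g (x t) i) * (γ * g (x (t + 1)) i))
        + α * ‖x (t + 1) - x t‖ ^ 2 + α * ‖xs - x (t + 1)‖ ^ 2
      ≤ ⟪fgrad t (x t), xs - x t⟫
        + (∑ i, (Q t i + γ * g (x t) i) * (γ * g xs i))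
        + α * ‖xs - x t‖ ^ 2 := by
    intro t ht
    obtain ⟨humem, hmin⟩ := hxupd t ht
    set c := x t with hc
    set u := x (t + 1) with hu
    set d := fgrad t (x t) with hd
    set φ : EuclideanSpace ℝ (Fin n) → ℝ :=
      fun z => ⟪d, z - c⟫ + (∑ i, (Q t i + γ * g c i) * (γ * g z i)) + α * ‖z - c‖ ^ 2
      with hφ
    have hminφ : ∀ z ∈ X₀, φ u ≤ φ z := by
      intro z hz
      have := hmin z hz
      simp only [hφ]
      exact this
    have key : ∀ l : ℝ, 0 < l → l ≤ 1 →
        φ u + α * ‖xs - u‖ ^ 2 ≤ φ xs + α * (l * ‖xs - u‖ ^ 2) := by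
      intro l hl0 hl1
      have hwmem : (1 - l) • u + l • xs ∈ X₀ :=
        hconv humem hxs (by linarith) (le_of_lt hl0) (by ring)
      set w := (1 - l) • u + l • xs with hwdef
      have h1 : φ u ≤ φ w := hminφ w hwmem
      have hinner : ⟪d, w - c⟫ = (1 - l) * ⟪d, u - c⟫ + l * ⟪d, xs - c⟫ := by
        have hwc : w - c = (1 - l) • (u - c) + l • (xs - c) := by
          rw [hwdef]; module
        rw [hwc, inner_add_right, real_inner_smul_right, real_inner_smul_right]
      have hsum : (∑ i, (Q t i + γ * g c i) * (γ * g w i))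
          ≤ (1 - l) * (∑ i, (Q t i + γ * g c i) * (γ * g u i))
            + l * (∑ i, (Q t i + γ * g c i) * (γ * g xs i)) := by
        rw [Finset.mul_sum, Finset.mul_sum, ← Finset.sum_add_distrib]
        apply Finset.sum_le_sum
        intro i _
        have hgc := (hgconv i).2 (Set.mem_univ u) (Set.mem_univ xs)
          (by linarith : (0:ℝ) ≤ 1 - l) (le_of_lt hl0) (by ring)
        simp only [smul_eq_mul] at hgc
        have hQnni : 0 ≤ Q t i + γ * g c i := by
          have := (hQv t ht i).1
          simp only [← hc] at this
          linarith
        have hmul := mul_le_mul_of_nonneg_left hgc (mul_nonneg hQnni hγ.le)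
        nlinarith [hmul]
      have hnorm : α * ‖w - c‖ ^ 2
          = (1 - l) * (α * ‖u - c‖ ^ 2) + l * (α * ‖xs - c‖ ^ 2)
            - α * (l * (1 - l) * ‖xs - u‖ ^ 2) := by
        have hwc : w - c = (1 - l) • (u - c) + l • (xs - c) := by
          rw [hwdef]; module
        have h3 : xs - c - (u - c) = xs - u := by abel
        rw [hwc, combo_norm_sq, h3]
        ring
      have h2 : φ w ≤ (1 - l) * φ u + l * φ xs - α * (l * (1 - l) * ‖xs - u‖ ^ 2) := by
        simp only [hφ]
        rw [hinner, hnorm]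
        linarith [hsum]
      have h4 : l * (φ u - (φ xs - α * ((1 - l) * ‖xs - u‖ ^ 2))) ≤ 0 := by
        linarith [h1.trans h2]
      have h5 : φ u - (φ xs - α * ((1 - l) * ‖xs - u‖ ^ 2)) ≤ 0 := by
        have := (mul_le_mul_iff_of_pos_left hl0).mp (by linarith :
          l * (φ u - (φ xs - α * ((1 - l) * ‖xs - u‖ ^ 2))) ≤ l * 0)
        linarith
      linarith [h5]
    have hfinal : φ u + α * ‖xs - u‖ ^ 2 ≤ φ xs := by
      have hA : 0 ≤ α * ‖xs - u‖ ^ 2 := mul_nonneg hαpos.le (sq_nonneg _)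
      refine le_of_forall_pos_le_add ?_
      intro ε' hε'
      have hdenpos : (0:ℝ) < α * ‖xs - u‖ ^ 2 + 1 := by linarith
      set l := min 1 (ε' / (α * ‖xs - u‖ ^ 2 + 1)) with hldef
      have hl0 : 0 < l := lt_min zero_lt_one (div_pos hε' hdenpos)
      have hl1 : l ≤ 1 := min_le_left _ _
      have hk := key l hl0 hl1
      have hsmall : α * (l * ‖xs - u‖ ^ 2) ≤ ε' := by
        have h6 : l ≤ ε' / (α * ‖xs - u‖ ^ 2 + 1) := min_le_right _ _
        have h7 : α * (l * ‖xs - u‖ ^ 2) = l * (α * ‖xs - u‖ ^ 2) := by ring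
        rw [h7]
        calc l * (α * ‖xs - u‖ ^ 2)
            ≤ (ε' / (α * ‖xs - u‖ ^ 2 + 1)) * (α * ‖xs - u‖ ^ 2) :=
              mul_le_mul_of_nonneg_right h6 hA
          _ ≤ ε' := by
              rw [div_mul_eq_mul_div, div_le_iff₀ hdenpos]
              nlinarith [hA, hε'.le]
      linarith
    simp only [hφ] at hfinal
    linarith [hfinal]
  -- per-step master inequality
  have hstep : ∀ t ∈ Finset.Icc 1 T, f t (x t) ≤ f t xs + 1/(2*η)
      + ((α * ‖xs - x t‖ ^ 2 + L t) - (α * ‖xs - x (t+1)‖ ^ 2 + L (t+1))) := by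
    intro t htmem
    obtain ⟨ht1, htT⟩ := Finset.mem_Icc.mp htmem
    have hgr := convex_grad_ineq (hfconv t htmem) (hfgrad t htmem (x t)) xs
    have hst := hstrong t ht1
    have hdr := hdrift t ht1
    have hlp := hlip2 t ht1
    have hSxs : (∑ i, (Q t i + γ * g (x t) i) * (γ * g xs i)) ≤ 0 :=
      Finset.sum_nonpos (fun i _ => by
        have h1 : 0 ≤ Q t i + γ * g (x t) i := by linarith [(hQv t ht1 i).1]
        have h2 : γ * g xs i ≤ 0 := by
          have := mul_nonneg hγ.le (neg_nonneg.mpr (hfeas i)); linarith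
        have := mul_nonneg h1 (neg_nonneg.mpr h2)
        linarith)
    have hcs : -⟪fgrad t (x t), x (t+1) - x t⟫
        ≤ 1/(2*η) + (η/2) * ‖x (t+1) - x t‖^2 := by
      have h1 : -⟪fgrad t (x t), x (t+1) - x t⟫
          ≤ ‖fgrad t (x t)‖ * ‖x (t+1) - x t‖ :=
        le_trans (neg_le_abs _) (abs_real_inner_le_norm _ _)
      have h2 : ‖fgrad t (x t)‖ * ‖x (t+1) - x t‖ ≤ ‖x (t+1) - x t‖ := by
        have := hfgradbd t htmem (x t) (hxX t ht1)
        nlinarith [norm_nonneg (x (t+1) - x t)]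
      have key2 : 2*η*‖x (t+1) - x t‖ ≤ 1 + η^2*‖x (t+1) - x t‖^2 := by
        nlinarith [sq_nonneg (η * ‖x (t+1) - x t‖ - 1)]
      have e : (1 + η^2*‖x (t+1) - x t‖^2 - 2*η*‖x (t+1) - x t‖)/(2*η)
          = 1/(2*η) + (η/2)*‖x (t+1) - x t‖^2 - ‖x (t+1) - x t‖ := by
        field_simp
      have h3 := div_nonneg (by linarith :
        (0:ℝ) ≤ 1 + η^2*‖x (t+1) - x t‖^2 - 2*η*‖x (t+1) - x t‖)
        (by linarith : (0:ℝ) ≤ 2*η)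
      rw [e] at h3
      linarith
    have hcoef : (η/2 + γ^2*β^2/2 - α) * ‖x (t+1) - x t‖^2 ≤ 0 :=
      mul_nonpos_iff.mpr (Or.inr ⟨by linarith, sq_nonneg _⟩)
    linarith [hgr, hst, hdr, hlp, hSxs, hcs, hcoef]
  -- sum up
  have hsumstep := Finset.sum_le_sum hstep
  have htel : ∑ t ∈ Finset.Icc 1 T,
      ((α * ‖xs - x t‖ ^ 2 + L t) - (α * ‖xs - x (t+1)‖ ^ 2 + L (t+1)))
      = (α * ‖xs - x 1‖ ^ 2 + L 1) - (α * ‖xs - x (T+1)‖ ^ 2 + L (T+1)) :=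
    telescope_icc (fun t => α * ‖xs - x t‖ ^ 2 + L t) T
  have hconst : ∑ _t ∈ Finset.Icc 1 T, (1/(2*η) : ℝ) = (T : ℝ) * (1/(2*η)) := by
    rw [Finset.sum_const, Nat.card_Icc]
    simp [nsmul_eq_mul]
  rw [Finset.sum_add_distrib, Finset.sum_add_distrib, htel, hconst] at hsumstep
  have hLT1 := hLnn (T+1) (by omega)
  have hnn : (0:ℝ) ≤ α * ‖xs - x (T+1)‖ ^ 2 := mul_nonneg hαpos.le (sq_nonneg _)
  rw [hL1] at hsumstep
  have hTη : (T : ℝ) * (1/(2*η)) = T / (2*η) := by ring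
  rw [hTη] at hsumstep
  refine le_trans hsumstep ?_
  linarith [hLT1, hnn]
end

section
/- (Lemma 2, part 2: constraint violation bound of the virtual-queue algorithm.) Let η > 0 and suppose the algorithm parameter satisfies α ≥ (1/2)(γ²β² + η). Then for all T ≥ 1 and every constraint index i ∈ {1,…,m}, the iterates x(1),…,x(T) of the virtual-queue online algorithm satisfy Σ_{t=1}^T g_i(x(t)) ≤ 2G₂ + (αG₁² + G₁)/(γ²ε) + 2G₂²/ε. -/
open RealInnerProductSpace

set_option maxHeartbeats 1000000


private lemma euc_norm_sq_eq {m : ℕ} (u : EuclideanSpace ℝ (Fin m)) :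
    ‖u‖ ^ 2 = ∑ i, (u i) ^ 2 := by
  rw [EuclideanSpace.norm_eq, Real.sq_sqrt (by positivity)]
  simp [Real.norm_eq_abs, sq_abs]

private lemma euc_coord_le_norm {m : ℕ} (u : EuclideanSpace ℝ (Fin m)) (i : Fin m) :
    |u i| ≤ ‖u‖ := by
  have h1 := euc_norm_sq_eq u
  have h2 : (u i) ^ 2 ≤ ∑ j, (u j) ^ 2 :=
    Finset.single_le_sum (fun j _ => sq_nonneg (u j)) (Finset.mem_univ i)
  nlinarith [norm_nonneg u, abs_nonneg (u i), sq_abs (u i)]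

private lemma euc_norm_le_of_abs_le {m : ℕ} {u v : EuclideanSpace ℝ (Fin m)}
    (h : ∀ i, |u i| ≤ |v i|) : ‖u‖ ≤ ‖v‖ := by
  rw [EuclideanSpace.norm_eq, EuclideanSpace.norm_eq]
  apply Real.sqrt_le_sqrt
  apply Finset.sum_le_sum
  intro j _
  simp only [Real.norm_eq_abs]
  have := h j
  nlinarith [abs_nonneg (u j), abs_nonneg (v j)]

private lemma euc_norm_le_sum {m : ℕ} (u : EuclideanSpace ℝ (Fin m))
    (h : ∀ i, 0 ≤ u i) : ‖u‖ ≤ ∑ i, u i := by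
  have h1 := euc_norm_sq_eq u
  have h2 : (∑ i, (u i) ^ 2) ≤ (∑ i, u i) ^ 2 :=
    Finset.sum_sq_le_sq_sum_of_nonneg (fun i _ => h i)
  have h3 : 0 ≤ ∑ i, u i := Finset.sum_nonneg (fun i _ => h i)
  nlinarith [norm_nonneg u]

private lemma euc_inner_sum {m : ℕ} (u v : EuclideanSpace ℝ (Fin m)) :
    ⟪u, v⟫ = ∑ i, u i * v i := by
  simp [PiLp.inner_apply, RCLike.inner_apply, conj_trivial]
  exact Finset.sum_congr rfl (fun _ _ => mul_comm _ _)


/-- Lemma 2, part 2 (constraint violation bound of the virtual-queue online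
algorithm): if `α ≥ (1/2)(γ²β² + η)`, then for all `T ≥ 1` and every constraint
index `i`, `Σ_{t=1}^T g_i(x(t)) ≤ 2G₂ + (αG₁² + G₁)/(γ²ε) + 2G₂²/ε`. -/
theorem stmt3 {n m : ℕ}
    (X₀ : Set (EuclideanSpace ℝ (Fin n))) (hne : X₀.Nonempty)
    (hcomp : IsCompact X₀) (hconv : Convex ℝ X₀)
    (G₁ G₂ β γ ε α η : ℝ) (hG₁ : 0 < G₁)
    (hdiam : ∀ x ∈ X₀, ∀ y ∈ X₀, ‖x - y‖ ≤ G₁)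
    (T : ℕ) (hT : 1 ≤ T)
    (f : ℕ → EuclideanSpace ℝ (Fin n) → ℝ)
    (fgrad : ℕ → EuclideanSpace ℝ (Fin n) → EuclideanSpace ℝ (Fin n))
    (hfconv : ∀ t ∈ Finset.Icc 1 T, ConvexOn ℝ Set.univ (f t))
    (hfgrad : ∀ t ∈ Finset.Icc 1 T, ∀ x, HasGradientAt (f t) (fgrad t x) x)
    (hfgradbd : ∀ t ∈ Finset.Icc 1 T, ∀ x ∈ X₀, ‖fgrad t x‖ ≤ 1)
    (g : EuclideanSpace ℝ (Fin n) → EuclideanSpace ℝ (Fin m))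
    (hgconv : ∀ i, ConvexOn ℝ Set.univ (fun x => g x i))
    (hgbd : ∀ x ∈ X₀, ‖g x‖ ≤ G₂)
    (hglip : ∀ x ∈ X₀, ∀ y ∈ X₀, ‖g x - g y‖ ≤ β * ‖x - y‖)
    (hγ : 0 < γ) (hε : 0 < ε)
    (xhat : EuclideanSpace ℝ (Fin n)) (hxhat : xhat ∈ X₀)
    (hslater : ∀ i, g xhat i ≤ -ε)
    (hη : 0 < η) (hα : (1 / 2) * (γ ^ 2 * β ^ 2 + η) ≤ α)
    -- the virtual-queue online algorithm
    (x : ℕ → EuclideanSpace ℝ (Fin n))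
    (Q : ℕ → Fin m → ℝ)
    (hx1 : x 1 ∈ X₀)
    (hQ0 : ∀ i, Q 0 i = 0)
    (hQ : ∀ t, 1 ≤ t → ∀ i,
      Q t i = max (-(γ * g (x t) i)) (Q (t - 1) i + γ * g (x t) i))
    (hxupd : ∀ t, 1 ≤ t → x (t + 1) ∈ X₀ ∧
      ∀ z ∈ X₀,
        ⟪fgrad t (x t), x (t + 1) - x t⟫
            + (∑ i, (Q t i + γ * g (x t) i) * (γ * g (x (t + 1)) i))
            + α * ‖x (t + 1) - x t‖ ^ 2 ≤
          ⟪fgrad t (x t), z - x t⟫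
            + (∑ i, (Q t i + γ * g (x t) i) * (γ * g z i))
            + α * ‖z - x t‖ ^ 2)
    :
    ∀ i, ∑ t ∈ Finset.Icc 1 T, g (x t) i ≤
      2 * G₂ + (α * G₁ ^ 2 + G₁) / (γ ^ 2 * ε) + 2 * G₂ ^ 2 / ε := by
  intro i
  have hγε : (0:ℝ) < γ * ε := mul_pos hγ hε
  -- membership of iterates
  have hxmem : ∀ t, 1 ≤ t → x t ∈ X₀ := by
    intro t ht
    match t, ht with
    | 1, _ => exact hx1
    | (k+2), _ => exact (hxupd (k+1) (by omega)).1
  have hG₂ : 0 ≤ G₂ := le_trans (norm_nonneg _) (hgbd (x 1) hx1)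
  have hα0 : 0 ≤ α := by nlinarith [sq_nonneg (γ * β)]
  -- coordinates of queue vector
  let q : ℕ → EuclideanSpace ℝ (Fin m) := fun t => (WithLp.equiv 2 (Fin m → ℝ)).symm (Q t)
  have hq : ∀ t j, q t j = Q t j := fun _ _ => rfl
  -- nonnegativity of queues
  have hQnonneg : ∀ t j, 0 ≤ Q t j := by
    intro t
    induction t with
    | zero => intro j; simp [hQ0]
    | succ k ih =>
      intro j
      rw [hQ (k+1) (by omega) j]
      simp only [Nat.add_sub_cancel]
      rcases le_total 0 (γ * g (x (k+1)) j) with h | h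
      · exact le_trans (by linarith [ih j]) (le_max_right _ _)
      · exact le_trans (by linarith) (le_max_left _ _)
  -- Q t j + γ g(x t) j ≥ 0 for t ≥ 1
  have hQa : ∀ t, 1 ≤ t → ∀ j, 0 ≤ Q t j + γ * g (x t) j := by
    intro t ht j
    have := le_max_left (-(γ * g (x t) j)) (Q (t-1) j + γ * g (x t) j)
    rw [← hQ t ht j] at this
    linarith
  -- telescoping sum bound
  have hsum : ∀ N, γ * (∑ t ∈ Finset.Icc 1 N, g (x t) i) ≤ Q N i := by
    intro N
    induction N with
    | zero => simp [hQ0]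
    | succ k ih =>
      rw [Finset.sum_Icc_succ_top (by omega : 1 ≤ k + 1), mul_add]
      have hstep : Q k i + γ * g (x (k+1)) i ≤ Q (k+1) i := by
        rw [hQ (k+1) (by omega) i]
        simp only [Nat.add_sub_cancel]
        exact le_max_right _ _
      linarith
  -- norm of g bounded
  have hgb : ∀ t, 1 ≤ t → ‖g (x t)‖ ≤ G₂ := fun t ht => hgbd (x t) (hxmem t ht)
  have hsmul : ∀ y : EuclideanSpace ℝ (Fin n), ‖(γ • g y : EuclideanSpace ℝ (Fin m))‖ = γ * ‖g y‖ := by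
    intro y
    rw [norm_smul, Real.norm_eq_abs, abs_of_pos hγ]
  have hsmulco : ∀ (y : EuclideanSpace ℝ (Fin n)) j, (γ • g y : EuclideanSpace ℝ (Fin m)) j = γ * g y j :=
    fun _ _ => rfl
  set C : ℝ := G₁ + α * G₁ ^ 2 + γ ^ 2 * ε * G₂ + 2 * γ ^ 2 * G₂ ^ 2 with hCdef
  have hC : 0 ≤ C := by
    have h1 : 0 ≤ α * G₁ ^ 2 := mul_nonneg hα0 (sq_nonneg G₁)
    have h2 : 0 ≤ γ ^ 2 * ε * G₂ := mul_nonneg (mul_nonneg (sq_nonneg γ) hε.le) hG₂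
    have h3 : 0 ≤ γ ^ 2 * G₂ ^ 2 := mul_nonneg (sq_nonneg γ) (sq_nonneg G₂)
    rw [hCdef]
    linarith
  -- drift inequality
  have key : ∀ k, 1 ≤ k → k + 1 ≤ T →
      ‖q (k+1)‖ ^ 2 ≤ ‖q k‖ ^ 2 - 2 * (γ * ε) * ‖q k‖ + 2 * C := by
    intro k hk hkT
    have hxk : x k ∈ X₀ := hxmem k hk
    have hxk1 : x (k+1) ∈ X₀ := (hxupd k hk).1
    have hmin := (hxupd k hk).2 xhat hxhat
    have hgradbd : ‖fgrad k (x k)‖ ≤ 1 :=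
      hfgradbd k (Finset.mem_Icc.mpr ⟨hk, by omega⟩) (x k) hxk
    -- inner product difference bound
    have hinner : ⟪fgrad k (x k), xhat - x k⟫ - ⟪fgrad k (x k), x (k+1) - x k⟫ ≤ G₁ := by
      rw [← inner_sub_right]
      have h1 : xhat - x k - (x (k+1) - x k) = xhat - x (k+1) := by abel
      rw [h1]
      calc ⟪fgrad k (x k), xhat - x (k+1)⟫ ≤ ‖fgrad k (x k)‖ * ‖xhat - x (k+1)‖ :=
            real_inner_le_norm _ _
        _ ≤ 1 * G₁ :=
            mul_le_mul hgradbd (hdiam xhat hxhat _ hxk1) (norm_nonneg _) zero_le_one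
        _ = G₁ := one_mul _
    -- slater term
    have hsum1 : (∑ j, (Q k j + γ * g (x k) j) * (γ * g xhat j))
        ≤ -(γ * ε) * (∑ j, (Q k j + γ * g (x k) j)) := by
      rw [Finset.mul_sum]
      apply Finset.sum_le_sum
      intro j _
      have h1 : γ * g xhat j ≤ -(γ * ε) := by
        have := hslater j
        nlinarith
      calc (Q k j + γ * g (x k) j) * (γ * g xhat j)
          ≤ (Q k j + γ * g (x k) j) * (-(γ * ε)) :=
            mul_le_mul_of_nonneg_left h1 (hQa k hk j)
        _ = -(γ * ε) * (Q k j + γ * g (x k) j) := by ring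
    -- lower bound on the sum of Q + g̃
    have hlow : ‖q k‖ - γ * G₂ ≤ ∑ j, (Q k j + γ * g (x k) j) := by
      have h1 : ‖(q k + γ • g (x k) : EuclideanSpace ℝ (Fin m))‖
          ≤ ∑ j, (Q k j + γ * g (x k) j) := by
        have := euc_norm_le_sum (q k + γ • g (x k)) (fun j => by
          have := hQa k hk j
          simpa [hq, hsmulco] using this)
        simpa [hq, hsmulco] using this
      have h2 : ‖q k‖ ≤ ‖(q k + γ • g (x k) : EuclideanSpace ℝ (Fin m))‖ + ‖(γ • g (x k) : EuclideanSpace ℝ (Fin m))‖ := by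
        have : q k = (q k + γ • g (x k)) - γ • g (x k) := by abel
        calc ‖q k‖ = ‖(q k + γ • g (x k)) - γ • g (x k)‖ := by rw [← this]
          _ ≤ _ := norm_sub_le _ _
      have h3 : ‖(γ • g (x k) : EuclideanSpace ℝ (Fin m))‖ ≤ γ * G₂ := by
        rw [hsmul]
        exact mul_le_mul_of_nonneg_left (hgb k hk) hγ.le
      linarith
    -- Cauchy-Schwarz on cross term
    have hcs : -(γ ^ 2 * G₂ ^ 2) ≤ ∑ j, (γ * g (x k) j) * (γ * g (x (k+1)) j) := by
      have h1 : (∑ j, (γ * g (x k) j) * (γ * g (x (k+1)) j))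
          = γ ^ 2 * ⟪g (x k), g (x (k+1))⟫ := by
        rw [euc_inner_sum, Finset.mul_sum]
        apply Finset.sum_congr rfl
        intro j _
        ring
      rw [h1]
      have h2 : |⟪g (x k), g (x (k+1))⟫| ≤ ‖g (x k)‖ * ‖g (x (k+1))‖ := abs_real_inner_le_norm _ _
      have h3 := hgb k hk
      have h4 := hgb (k+1) (by omega)
      have h5 := neg_abs_le ⟪g (x k), g (x (k+1))⟫
      have h6 : ‖g (x k)‖ * ‖g (x (k+1))‖ ≤ G₂ * G₂ :=
        mul_le_mul h3 h4 (norm_nonneg _) hG₂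
      have h7 : -(G₂ ^ 2) ≤ ⟪g (x k), g (x (k+1))⟫ := by nlinarith
      have h8 := mul_le_mul_of_nonneg_left h7 (sq_nonneg γ)
      nlinarith
    -- split the sum in hmin
    have hsplit : (∑ j, (Q k j + γ * g (x k) j) * (γ * g (x (k+1)) j))
        = (∑ j, Q k j * (γ * g (x (k+1)) j)) + ∑ j, (γ * g (x k) j) * (γ * g (x (k+1)) j) := by
      rw [← Finset.sum_add_distrib]
      apply Finset.sum_congr rfl
      intro j _
      ring
    have hdist : α * ‖xhat - x k‖ ^ 2 ≤ α * G₁ ^ 2 := by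
      apply mul_le_mul_of_nonneg_left _ hα0
      have := hdiam xhat hxhat (x k) hxk
      nlinarith [norm_nonneg (xhat - x k)]
    have hnn : 0 ≤ α * ‖x (k+1) - x k‖ ^ 2 := mul_nonneg hα0 (sq_nonneg _)
    have hS1 : (∑ j, Q k j * (γ * g (x (k+1)) j))
        ≤ G₁ + α * G₁ ^ 2 + γ ^ 2 * G₂ ^ 2 + γ * ε * (γ * G₂) - γ * ε * ‖q k‖ := by
      have h7 : -(γ * ε) * (∑ j, (Q k j + γ * g (x k) j)) ≤ -(γ * ε) * (‖q k‖ - γ * G₂) := by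
        apply mul_le_mul_of_nonpos_left hlow (by linarith)
      rw [hsplit] at hmin
      linarith [hmin, hsum1, hinner, hdist, hnn, hcs, h7]
    -- per-coordinate drift
    have hcoORD : ∀ j, (Q (k+1) j) ^ 2 ≤ (Q k j) ^ 2
        + 2 * (Q k j * (γ * g (x (k+1)) j)) + 2 * (γ * g (x (k+1)) j) ^ 2 := by
      intro j
      rw [hQ (k+1) (by omega) j]
      simp only [Nat.add_sub_cancel]
      rcases max_cases (-(γ * g (x (k+1)) j)) (Q k j + γ * g (x (k+1)) j) with ⟨h1, h2⟩ | ⟨h1, h2⟩ <;>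
        rw [h1] <;> nlinarith [sq_nonneg (Q k j + γ * g (x (k+1)) j), sq_nonneg (γ * g (x (k+1)) j)]
    have hsumco : ‖q (k+1)‖ ^ 2 ≤ ‖q k‖ ^ 2
        + 2 * (∑ j, Q k j * (γ * g (x (k+1)) j)) + 2 * (γ ^ 2 * ‖g (x (k+1))‖ ^ 2) := by
      have e1 : ‖q (k+1)‖ ^ 2 = ∑ j, (Q (k+1) j) ^ 2 := euc_norm_sq_eq _
      have e2 : ‖q k‖ ^ 2 = ∑ j, (Q k j) ^ 2 := euc_norm_sq_eq _
      have e3 : γ ^ 2 * ‖g (x (k+1))‖ ^ 2 = ∑ j, (γ * g (x (k+1)) j) ^ 2 := by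
        rw [euc_norm_sq_eq, Finset.mul_sum]
        apply Finset.sum_congr rfl
        intro j _
        ring
      rw [e1, e2, e3]
      calc (∑ j, (Q (k+1) j) ^ 2)
          ≤ ∑ j, ((Q k j) ^ 2 + 2 * (Q k j * (γ * g (x (k+1)) j)) + 2 * (γ * g (x (k+1)) j) ^ 2) :=
            Finset.sum_le_sum (fun j _ => hcoORD j)
        _ = (∑ j, (Q k j) ^ 2) + 2 * (∑ j, Q k j * (γ * g (x (k+1)) j))
            + 2 * (∑ j, (γ * g (x (k+1)) j) ^ 2) := by
            rw [Finset.sum_add_distrib, Finset.sum_add_distrib, ← Finset.mul_sum, ← Finset.mul_sum]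
    have hg2 : γ ^ 2 * ‖g (x (k+1))‖ ^ 2 ≤ γ ^ 2 * G₂ ^ 2 := by
      have h4 := hgb (k+1) (by omega)
      have h5 : ‖g (x (k+1))‖ ^ 2 ≤ G₂ ^ 2 := by nlinarith [norm_nonneg (g (x (k+1)))]
      exact mul_le_mul_of_nonneg_left h5 (sq_nonneg γ)
    rw [hCdef]
    linarith [hsumco, hS1, hg2]
  -- bound on queue norm
  have hbound : ∀ t, 1 ≤ t → t ≤ T → ‖q t‖ ≤ C / (γ * ε) + γ * G₂ := by
    intro t
    induction t with
    | zero => omega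
    | succ k ih =>
      intro _ h2
      rcases Nat.eq_zero_or_pos k with hk0 | hk0
      · subst hk0
        have hb : ∀ j, |q 1 j| ≤ |(γ • g (x 1) : EuclideanSpace ℝ (Fin m)) j| := by
          intro j
          rw [hq, hsmulco, hQ 1 le_rfl j]
          simp only [Nat.sub_self, hQ0, zero_add]
          rw [max_comm, ← abs_eq_max_neg, abs_abs]
        have h3 : ‖q 1‖ ≤ γ * G₂ := by
          calc ‖q 1‖ ≤ ‖(γ • g (x 1) : EuclideanSpace ℝ (Fin m))‖ := euc_norm_le_of_abs_le hb
            _ = γ * ‖g (x 1)‖ := hsmul _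
            _ ≤ γ * G₂ := mul_le_mul_of_nonneg_left (hgb 1 le_rfl) hγ.le
        have h4 : 0 ≤ C / (γ * ε) := div_nonneg hC hγε.le
        linarith
      · have hqk := ih hk0 (by omega)
        have hdrift := key k hk0 h2
        rcases le_or_gt (C / (γ * ε)) ‖q k‖ with hc | hc
        · have h3 : C ≤ γ * ε * ‖q k‖ := by
            rw [div_le_iff₀ hγε] at hc
            linarith
          have h4 : ‖q (k+1)‖ ≤ ‖q k‖ := by
            nlinarith [norm_nonneg (q (k+1)), norm_nonneg (q k)]
          linarith
        · have hb : ∀ j, |(q (k+1) - q k : EuclideanSpace ℝ (Fin m)) j|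
              ≤ |(γ • g (x (k+1)) : EuclideanSpace ℝ (Fin m)) j| := by
            intro j
            have hco : (q (k+1) - q k : EuclideanSpace ℝ (Fin m)) j = Q (k+1) j - Q k j := rfl
            rw [hco, hsmulco, hQ (k+1) (by omega) j]
            simp only [Nat.add_sub_cancel]
            have hQk := hQnonneg k j
            have hb1 := le_abs_self (γ * g (x (k+1)) j)
            have hb2 := neg_abs_le (γ * g (x (k+1)) j)
            rcases max_cases (-(γ * g (x (k+1)) j)) (Q k j + γ * g (x (k+1)) j) with ⟨h1, h5⟩ | ⟨h1, h5⟩ <;>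
              rw [h1, abs_le] <;> constructor <;> linarith
          have h3 : ‖q (k+1) - q k‖ ≤ γ * G₂ := by
            calc ‖q (k+1) - q k‖ ≤ ‖(γ • g (x (k+1)) : EuclideanSpace ℝ (Fin m))‖ :=
                  euc_norm_le_of_abs_le hb
              _ = γ * ‖g (x (k+1))‖ := hsmul _
              _ ≤ γ * G₂ := mul_le_mul_of_nonneg_left (hgb (k+1) (by omega)) hγ.le
          have h4 : ‖q (k+1)‖ ≤ ‖q k‖ + γ * G₂ := by
            calc ‖q (k+1)‖ = ‖(q (k+1) - q k) + q k‖ := by rw [sub_add_cancel]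
              _ ≤ ‖q (k+1) - q k‖ + ‖q k‖ := norm_add_le _ _
              _ ≤ γ * G₂ + ‖q k‖ := by linarith
              _ = ‖q k‖ + γ * G₂ := by ring
          linarith
  -- conclude
  have h1 : γ * (∑ t ∈ Finset.Icc 1 T, g (x t) i) ≤ Q T i := hsum T
  have h2 : Q T i ≤ ‖q T‖ := by
    have h3 := euc_coord_le_norm (q T) i
    rw [hq] at h3
    linarith [le_abs_self (Q T i)]
  have h5 : ‖q T‖ ≤ C / (γ * ε) + γ * G₂ := hbound T hT le_rfl
  have h6 : (∑ t ∈ Finset.Icc 1 T, g (x t) i) ≤ (C / (γ * ε) + γ * G₂) / γ := by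
    rw [le_div_iff₀ hγ]
    linarith
  have heq : (C / (γ * ε) + γ * G₂) / γ
      = 2 * G₂ + (α * G₁ ^ 2 + G₁) / (γ ^ 2 * ε) + 2 * G₂ ^ 2 / ε := by
    rw [hCdef]
    field_simp
    ring
  linarith [heq ▸ h6]
end

section
/- (Per-window regret bound, key step in the proof of Theorem 1.) Fix one window W_k of the partition, let t_k¹ denote its first slot, and let x*(k) ∈ X₀ satisfy g_i(x*(k)) ≤ 0 for all i. Let η > 0 and suppose α ≥ (1/2)(γ²β² + η). Then for every window with |W_k| ≥ 1, the iterates produced by running the virtual-queue algorithm along the slots of W_k satisfy Σ_{t ∈ W_k} f^t(x(t)) ≤ Σ_{t ∈ W_k} f^t(x*(k)) + α‖x*(k) − x(t_k¹)‖² + |W_k|/(2η). -/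
open RealInnerProductSpace

set_option maxHeartbeats 1000000

open RealInnerProductSpace

section helpers

variable {E : Type*} [NormedAddCommGroup E] [InnerProductSpace ℝ E]

/-- Gradient inequality for convex differentiable functions. -/
lemma stmt4_grad_ineq [CompleteSpace E]
    {f : E → ℝ} {v : E} {x y : E}
    (hf : ConvexOn ℝ Set.univ f) (hgrad : HasGradientAt f v x) :
    f x + ⟪v, y - x⟫ ≤ f y := by
  set d := y - x with hd
  have hline : HasDerivAt (fun τ : ℝ => x + τ • d) d 0 := by
    simpa using ((hasDerivAt_id (0:ℝ)).smul_const d).const_add x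
  have hcomp : HasDerivAt (fun τ : ℝ => f (x + τ • d)) ⟪v, d⟫ 0 := by
    have hg' : HasFDerivAt f ((InnerProductSpace.toDual ℝ E) v) (x + (0:ℝ) • d) := by
      simpa using hgrad.hasFDerivAt
    have := hg'.comp_hasDerivAt 0 hline
    simpa [Function.comp_def] using this
  have hslope : ∀ τ : ℝ, τ ∈ Set.Ioc (0:ℝ) 1 →
      (f (x + τ • d) - f x)/τ ≤ f y - f x := by
    intro τ hτ
    have hcomb : x + τ • d = (1 - τ) • x + τ • y := by
      simp [hd, smul_sub, sub_smul]; abel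
    have := hf.2 (Set.mem_univ x) (Set.mem_univ y)
      (by linarith [hτ.2] : (0:ℝ) ≤ 1 - τ) (le_of_lt hτ.1) (by ring)
    rw [← hcomb] at this
    rw [div_le_iff₀ hτ.1]
    simp only [smul_eq_mul] at this
    nlinarith [hτ.1]
  have htend : Filter.Tendsto (fun τ : ℝ => (f (x + τ • d) - f x)/τ)
      (nhdsWithin 0 (Set.Ioi 0)) (nhds ⟪v, d⟫) := by
    have h0 := hcomp.hasDerivWithinAt (s := Set.Ioi (0:ℝ))
    have h2 := (hasDerivWithinAt_iff_tendsto_slope).1 h0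
    have h3 : Filter.Tendsto (slope (fun τ : ℝ => f (x + τ • d)) 0)
        (nhdsWithin 0 (Set.Ioi 0)) (nhds ⟪v, d⟫) := by
      apply h2.mono_left
      apply nhdsWithin_mono
      intro a ha
      exact ⟨ha, by simp; exact ne_of_gt ha⟩
    refine h3.congr' ?_
    filter_upwards [self_mem_nhdsWithin] with a ha
    simp [slope, ha, div_eq_inv_mul]
  have hle : ⟪v, d⟫ ≤ f y - f x := by
    refine le_of_tendsto htend ?_
    filter_upwards [Ioc_mem_nhdsGT_of_mem (by norm_num : (0:ℝ) ∈ Set.Ico (0:ℝ) 1)] with τ hτ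
    exact hslope τ hτ
  linarith

lemma stmt4_quad_combo (a b : E) (τ : ℝ) :
    ‖(1 - τ) • a + τ • b‖ ^ 2
      = (1 - τ) * ‖a‖ ^ 2 + τ * ‖b‖ ^ 2 - τ * (1 - τ) * ‖b - a‖ ^ 2 := by
  have h1 := real_inner_self_eq_norm_sq ((1 - τ) • a + τ • b)
  have h2 := real_inner_self_eq_norm_sq a
  have h3 := real_inner_self_eq_norm_sq b
  have h4 := real_inner_self_eq_norm_sq (b - a)
  simp only [inner_add_add_self, inner_sub_sub_self, real_inner_smul_left,
    real_inner_smul_right, real_inner_comm a b] at *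
  linear_combination -h1 + (1-τ)*h2 + τ*h3 - τ*(1-τ)*h4

/-- Strong-convexity pushback for minimizers of convex + quadratic. -/
lemma stmt4_pushback {X : Set E} (hX : Convex ℝ X) {ψ : E → ℝ} (hψ : ConvexOn ℝ X ψ)
    {α : ℝ} {x₀ p : E} (hp : p ∈ X)
    (hmin : ∀ z ∈ X, ψ p + α * ‖p - x₀‖ ^ 2 ≤ ψ z + α * ‖z - x₀‖ ^ 2) :
    ∀ z ∈ X, ψ p + α * ‖p - x₀‖ ^ 2 + α * ‖z - p‖ ^ 2
      ≤ ψ z + α * ‖z - x₀‖ ^ 2 := by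
  intro z hz
  have key : ∀ τ : ℝ, τ ∈ Set.Ioc (0:ℝ) 1 →
      ψ p + α * ‖p - x₀‖ ^ 2 + α * (1 - τ) * ‖z - p‖ ^ 2
        ≤ ψ z + α * ‖z - x₀‖ ^ 2 := by
    intro τ hτ
    set w := (1 - τ) • p + τ • z with hw
    have hwX : w ∈ X := hX hp hz (by linarith [hτ.2]) (le_of_lt hτ.1) (by ring)
    have hψw : ψ w ≤ (1 - τ) * ψ p + τ * ψ z :=
      hψ.2 hp hz (by linarith [hτ.2]) (le_of_lt hτ.1) (by ring)
    have hnorm : ‖w - x₀‖ ^ 2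
        = (1 - τ) * ‖p - x₀‖ ^ 2 + τ * ‖z - x₀‖ ^ 2 - τ * (1 - τ) * ‖z - p‖ ^ 2 := by
      have hcomb : w - x₀ = (1 - τ) • (p - x₀) + τ • (z - x₀) := by
        simp [hw, smul_sub, sub_smul]; abel
      rw [hcomb, stmt4_quad_combo]
      congr 3
      abel
    have hm := hmin w hwX
    rw [hnorm] at hm
    nlinarith [hτ.1, hτ.2, sq_nonneg ‖z - p‖]
  have htend : Filter.Tendsto
      (fun τ : ℝ => ψ p + α * ‖p - x₀‖ ^ 2 + α * (1 - τ) * ‖z - p‖ ^ 2)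
      (nhdsWithin 0 (Set.Ioi 0)) (nhds (ψ p + α * ‖p - x₀‖ ^ 2 + α * ‖z - p‖ ^ 2)) := by
    have h0 : Filter.Tendsto
        (fun τ : ℝ => ψ p + α * ‖p - x₀‖ ^ 2 + α * (1 - τ) * ‖z - p‖ ^ 2)
        (nhds 0) (nhds (ψ p + α * ‖p - x₀‖ ^ 2 + α * (1 - 0) * ‖z - p‖ ^ 2)) := by
      exact Continuous.tendsto (by continuity) 0
    simpa using h0.mono_left nhdsWithin_le_nhds
  refine le_of_tendsto htend ?_
  filter_upwards [Ioc_mem_nhdsGT_of_mem (by norm_num : (0:ℝ) ∈ Set.Ico (0:ℝ) 1)] with τ hτ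
  exact key τ hτ

lemma stmt4_drift_coord (q a : ℝ) : (max (-a) (q + a))^2 ≤ q^2 + 2*q*a + 2*a^2 := by
  rcases le_total (-a) (q+a) with h|h
  · rw [max_eq_right h]; nlinarith
  · rw [max_eq_left h]; nlinarith [sq_nonneg (q+a)]

lemma stmt4_norm_sq_sum {m : ℕ} (u : EuclideanSpace ℝ (Fin m)) :
    ‖u‖^2 = ∑ i, (u i)^2 := by
  rw [EuclideanSpace.norm_eq, Real.sq_sqrt (by positivity)]
  exact Finset.sum_congr rfl fun i _ => by rw [Real.norm_eq_abs, sq_abs]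

end helpers

/-- Per-window regret bound (key step in the proof of Theorem 1): fix one window
`W` of the partition of `{1,…,T}`, with slots listed in increasing order as
`s 1 < s 2 < … < s |W|` (so `t_k¹ = s 1`), and let `x*(k) ∈ X₀` be feasible
(`g_i(x*(k)) ≤ 0` for all `i`). If `α ≥ (1/2)(γ²β² + η)`, then the iterates of
the virtual-queue algorithm run along the slots of `W` satisfy
`Σ_{t ∈ W} f^t(x(t)) ≤ Σ_{t ∈ W} f^t(x*(k)) + α‖x*(k) − x(t_k¹)‖² + |W|/(2η)`. -/
theorem stmt4 {n m : ℕ}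
    (X₀ : Set (EuclideanSpace ℝ (Fin n))) (hne : X₀.Nonempty)
    (hcomp : IsCompact X₀) (hconv : Convex ℝ X₀)
    (G₁ G₂ β γ ε α η : ℝ) (hG₁ : 0 < G₁)
    (hdiam : ∀ x ∈ X₀, ∀ y ∈ X₀, ‖x - y‖ ≤ G₁)
    (T : ℕ) (hT : 1 ≤ T)
    (f : ℕ → EuclideanSpace ℝ (Fin n) → ℝ)
    (fgrad : ℕ → EuclideanSpace ℝ (Fin n) → EuclideanSpace ℝ (Fin n))
    (hfconv : ∀ t ∈ Finset.Icc 1 T, ConvexOn ℝ Set.univ (f t))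
    (hfgrad : ∀ t ∈ Finset.Icc 1 T, ∀ x, HasGradientAt (f t) (fgrad t x) x)
    (hfgradbd : ∀ t ∈ Finset.Icc 1 T, ∀ x ∈ X₀, ‖fgrad t x‖ ≤ 1)
    (g : EuclideanSpace ℝ (Fin n) → EuclideanSpace ℝ (Fin m))
    (hgconv : ∀ i, ConvexOn ℝ Set.univ (fun x => g x i))
    (hgbd : ∀ x ∈ X₀, ‖g x‖ ≤ G₂)
    (hglip : ∀ x ∈ X₀, ∀ y ∈ X₀, ‖g x - g y‖ ≤ β * ‖x - y‖)
    (hγ : 0 < γ) (hε : 0 < ε)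
    (xhat : EuclideanSpace ℝ (Fin n)) (hxhat : xhat ∈ X₀)
    (hslater : ∀ i, g xhat i ≤ -ε)
    (hη : 0 < η) (hα : (1 / 2) * (γ ^ 2 * β ^ 2 + η) ≤ α)
    -- one window `W` of the partition, with slots enumerated in increasing
    -- order by `s : {1, …, |W|} → W`
    (W : Finset ℕ) (hW : W ⊆ Finset.Icc 1 T) (hWne : W.Nonempty)
    (s : ℕ → ℕ)
    (hsmono : StrictMonoOn s (Set.Icc 1 W.card))
    (hsimg : W = (Finset.Icc 1 W.card).image s)
    -- the virtual-queue algorithm run along the slots of `W` (queues reset to 0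
    -- at the start of the window; `Q j` is the queue after position `j`)
    (x : ℕ → EuclideanSpace ℝ (Fin n))
    (Q : ℕ → Fin m → ℝ)
    (hx1 : x (s 1) ∈ X₀)
    (hQ0 : ∀ i, Q 0 i = 0)
    (hQ : ∀ j, 1 ≤ j → j ≤ W.card → ∀ i,
      Q j i = max (-(γ * g (x (s j)) i)) (Q (j - 1) i + γ * g (x (s j)) i))
    (hxupd : ∀ j, 1 ≤ j → j + 1 ≤ W.card → x (s (j + 1)) ∈ X₀ ∧
      ∀ z ∈ X₀,
        ⟪fgrad (s j) (x (s j)), x (s (j + 1)) - x (s j)⟫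
            + (∑ i, (Q j i + γ * g (x (s j)) i) * (γ * g (x (s (j + 1))) i))
            + α * ‖x (s (j + 1)) - x (s j)‖ ^ 2 ≤
          ⟪fgrad (s j) (x (s j)), z - x (s j)⟫
            + (∑ i, (Q j i + γ * g (x (s j)) i) * (γ * g z i))
            + α * ‖z - x (s j)‖ ^ 2)
    -- any fixed feasible point `x*(k)`
    (xs : EuclideanSpace ℝ (Fin n)) (hxs : xs ∈ X₀)
    (hfeas : ∀ i, g xs i ≤ 0) :
    ∑ t ∈ W, f t (x t) ≤
      ∑ t ∈ W, f t xs + α * ‖xs - x (s 1)‖ ^ 2 + W.card / (2 * η) := by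
  have hN : 1 ≤ W.card := hWne.card_pos
  have hα0 : (0:ℝ) ≤ α := by nlinarith [sq_nonneg (γ*β), hη.le]
  -- membership of iterates
  have hxmem : ∀ j, 1 ≤ j → j ≤ W.card → x (s j) ∈ X₀ := by
    intro j hj1 hjN
    obtain ⟨k, rfl⟩ : ∃ k, j = k + 1 := ⟨j - 1, by omega⟩
    rcases Nat.eq_zero_or_pos k with hk | hk
    · subst hk; exact hx1
    · exact (hxupd k hk (by omega)).1
  -- slots belong to Icc 1 T
  have hsT : ∀ j, 1 ≤ j → j ≤ W.card → s j ∈ Finset.Icc 1 T := by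
    intro j hj1 hjN
    exact hW (by rw [hsimg]; exact Finset.mem_image_of_mem s (Finset.mem_Icc.2 ⟨hj1, hjN⟩))
  -- queues are nonnegative
  have hQnn : ∀ j, j ≤ W.card → ∀ i, 0 ≤ Q j i := by
    intro j
    induction j with
    | zero => intro _ i; exact (hQ0 i).ge
    | succ k ih =>
      intro hk i
      have hq := hQ (k+1) (by omega) hk i
      simp only [Nat.add_sub_cancel] at hq
      have h1 : -(γ * g (x (s (k+1))) i) ≤ Q (k+1) i := hq ▸ le_max_left _ _
      have h2 : Q k i + γ * g (x (s (k+1))) i ≤ Q (k+1) i := hq ▸ le_max_right _ _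
      have h3 := ih (by omega) i
      linarith
  -- queues dominate constraint magnitude
  have hQlb : ∀ j, 1 ≤ j → j ≤ W.card → ∀ i, |γ * g (x (s j)) i| ≤ Q j i := by
    intro j hj1 hjN i
    obtain ⟨p, rfl⟩ : ∃ p, j = p + 1 := ⟨j - 1, by omega⟩
    have hq := hQ (p+1) (by omega) hjN i
    simp only [Nat.add_sub_cancel] at hq
    have hnn := hQnn p (by omega) i
    rw [hq]
    refine abs_le.2 ⟨?_, ?_⟩
    · have := le_max_left (-(γ * g (x (s (p+1))) i)) (Q p i + γ * g (x (s (p+1))) i)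
      linarith
    · have := le_max_right (-(γ * g (x (s (p+1))) i)) (Q p i + γ * g (x (s (p+1))) i)
      linarith
  -- the potential
  set P : ℕ → ℝ := fun j => α * ‖xs - x (s j)‖^2
      + (∑ i, (Q j i)^2)/2 - (∑ i, (γ * g (x (s j)) i)^2)/2 with hP_def
  clear_value P
  -- per-slot key inequality
  have key : ∀ j, 1 ≤ j → j + 1 ≤ W.card →
      f (s j) (x (s j)) - f (s j) xs ≤ 1/(2*η) + P j - P (j+1) := by
    intro j hj1 hjN
    have hst : s j ∈ Finset.Icc 1 T := hsT j hj1 (by omega)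
    have hxcX : x (s j) ∈ X₀ := hxmem j hj1 (by omega)
    have hxnX : x (s (j+1)) ∈ X₀ := hxmem (j+1) (by omega) hjN
    set xc := x (s j) with hxc_def
    set xn := x (s (j+1)) with hxn_def
    set v := fgrad (s j) xc with hv_def
    set c : Fin m → ℝ := fun i => Q j i + γ * g xc i with hc_def
    have hcnn : ∀ i, 0 ≤ c i := by
      intro i
      have h1 := hQlb j hj1 (by omega) i
      have h2 := neg_abs_le (γ * g xc i)
      simp only [hc_def]
      rw [hxc_def] at *
      linarith
    set ψ : EuclideanSpace ℝ (Fin n) → ℝ :=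
      fun z => ⟪v, z - xc⟫ + ∑ i, c i * (γ * g z i) with hψ_def
    have hψconv : ConvexOn ℝ X₀ ψ := by
      refine ⟨hconv, ?_⟩
      intro p hp q hq a b ha hb hab
      have h1 : a • xc + b • xc = xc := by rw [← add_smul, hab, one_smul]
      have hcomb : (a • p + b • q) - xc = a • (p - xc) + b • (q - xc) := by
        calc (a • p + b • q) - xc = (a • p + b • q) - (a • xc + b • xc) := by rw [h1]
          _ = a • (p - xc) + b • (q - xc) := by rw [smul_sub, smul_sub]; abel
      have hinner : ⟪v, (a • p + b • q) - xc⟫ = a * ⟪v, p - xc⟫ + b * ⟪v, q - xc⟫ := by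
        rw [hcomb, inner_add_right, real_inner_smul_right, real_inner_smul_right]
      have hsum : ∀ i : Fin m, c i * (γ * g (a • p + b • q) i)
          ≤ a * (c i * (γ * g p i)) + b * (c i * (γ * g q i)) := by
        intro i
        have hg := (hgconv i).2 (Set.mem_univ p) (Set.mem_univ q) ha hb hab
        simp only [smul_eq_mul] at hg
        have hcγ : 0 ≤ c i * γ := mul_nonneg (hcnn i) hγ.le
        nlinarith [mul_le_mul_of_nonneg_left hg hcγ]
      have hS := Finset.sum_le_sum (fun i (_ : i ∈ Finset.univ) => hsum i)
      have hsplit2 : ∑ i : Fin m, (a * (c i * (γ * g p i)) + b * (c i * (γ * g q i)))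
          = a * (∑ i, c i * (γ * g p i)) + b * (∑ i, c i * (γ * g q i)) := by
        rw [Finset.sum_add_distrib, ← Finset.mul_sum, ← Finset.mul_sum]
      simp only [hψ_def, smul_eq_mul]
      rw [hinner]
      rw [hsplit2] at hS
      linarith
    have hmin : ∀ z ∈ X₀, ψ xn + α * ‖xn - xc‖ ^ 2 ≤ ψ z + α * ‖z - xc‖ ^ 2 := by
      intro z hz
      have h := (hxupd j hj1 hjN).2 z hz
      simp only [hψ_def, hc_def]
      exact h
    have hpush := stmt4_pushback hconv hψconv hxnX hmin xs hxs
    have hgradineq : f (s j) xc + ⟪v, xs - xc⟫ ≤ f (s j) xs :=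
      stmt4_grad_ineq (hfconv (s j) hst) (hfgrad (s j) hst xc)
    have hψxs : ψ xs ≤ ⟪v, xs - xc⟫ := by
      have hs0 : ∑ i : Fin m, c i * (γ * g xs i) ≤ 0 := by
        refine Finset.sum_nonpos fun i _ => mul_nonpos_of_nonneg_of_nonpos (hcnn i) ?_
        have := hfeas i
        nlinarith
      simp only [hψ_def]
      linarith
    -- drift bound
    have hdrift : ∑ i, (Q (j+1) i)^2
        ≤ (∑ i, (Q j i)^2) + 2*(∑ i, Q j i * (γ * g xn i)) + 2*(∑ i, (γ * g xn i)^2) := by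
      have h1 : ∀ i : Fin m, (Q (j+1) i)^2
          ≤ (Q j i)^2 + 2*(Q j i)*(γ * g xn i) + 2*(γ * g xn i)^2 := by
        intro i
        have hq := hQ (j+1) (by omega) hjN i
        simp only [Nat.add_sub_cancel] at hq
        rw [← hxn_def] at hq
        rw [hq]
        exact stmt4_drift_coord _ _
      have h2 := Finset.sum_le_sum (fun i (_ : i ∈ Finset.univ) => h1 i)
      calc ∑ i, (Q (j+1) i)^2
          ≤ ∑ i : Fin m, ((Q j i)^2 + 2*(Q j i)*(γ * g xn i) + 2*(γ * g xn i)^2) := h2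
        _ = (∑ i, (Q j i)^2) + 2*(∑ i, Q j i * (γ * g xn i)) + 2*(∑ i, (γ * g xn i)^2) := by
            rw [Finset.sum_add_distrib, Finset.sum_add_distrib,
              show ∑ i : Fin m, 2*(Q j i)*(γ * g xn i) = 2*(∑ i, Q j i * (γ * g xn i)) by
                rw [Finset.mul_sum]; exact Finset.sum_congr rfl fun i _ => by ring,
              show ∑ i : Fin m, 2*(γ * g xn i)^2 = 2*(∑ i, (γ * g xn i)^2) by
                rw [Finset.mul_sum]]
    -- split the algorithm cross term
    have hsplit : ∑ i, c i * (γ * g xn i)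
        = (∑ i, Q j i * (γ * g xn i)) + ∑ i, (γ * g xc i)*(γ * g xn i) := by
      rw [← Finset.sum_add_distrib]
      exact Finset.sum_congr rfl fun i _ => by simp only [hc_def]; ring
    have hcross : ∑ i, (γ * g xc i)*(γ * g xn i)
        = (∑ i, (γ * g xn i)^2)/2 + (∑ i, (γ * g xc i)^2)/2
          - (∑ i, (γ * g xn i - γ * g xc i)^2)/2 := by
      rw [Finset.sum_div, Finset.sum_div, Finset.sum_div, ← Finset.sum_add_distrib,
        ← Finset.sum_sub_distrib]
      exact Finset.sum_congr rfl fun i _ => by ring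
    -- Lipschitz bound
    have hlip2 : ∑ i, (γ * g xn i - γ * g xc i)^2 ≤ γ^2*β^2*‖xn - xc‖^2 := by
      have e1 : ∑ i, (γ * g xn i - γ * g xc i)^2 = γ^2 * ‖g xn - g xc‖^2 := by
        rw [stmt4_norm_sq_sum, Finset.mul_sum]
        refine Finset.sum_congr rfl fun i _ => ?_
        have : (g xn - g xc) i = g xn i - g xc i := rfl
        rw [this]; ring
      have e3 : ‖g xn - g xc‖ ≤ β * ‖xn - xc‖ := hglip xn hxnX xc hxcX
      have e4 : ‖g xn - g xc‖^2 ≤ β^2 * ‖xn - xc‖^2 := by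
        have h := mul_self_le_mul_self (norm_nonneg (g xn - g xc)) e3
        calc ‖g xn - g xc‖^2 = ‖g xn - g xc‖ * ‖g xn - g xc‖ := sq (‖g xn - g xc‖)
          _ ≤ (β * ‖xn - xc‖) * (β * ‖xn - xc‖) := h
          _ = β^2 * ‖xn - xc‖^2 := by ring
      calc ∑ i, (γ * g xn i - γ * g xc i)^2 = γ^2 * ‖g xn - g xc‖^2 := e1
        _ ≤ γ^2 * (β^2 * ‖xn - xc‖^2) := mul_le_mul_of_nonneg_left e4 (sq_nonneg γ)
        _ = γ^2*β^2*‖xn - xc‖^2 := by ring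
    -- Cauchy-Schwarz + gradient bound
    have hCS : ⟪v, xc - xn⟫ ≤ ‖xn - xc‖ := by
      calc ⟪v, xc - xn⟫ ≤ ‖v‖ * ‖xc - xn‖ := real_inner_le_norm _ _
        _ ≤ 1 * ‖xc - xn‖ :=
            mul_le_mul_of_nonneg_right (hfgradbd (s j) hst xc hxcX) (norm_nonneg _)
        _ = ‖xn - xc‖ := by rw [one_mul, norm_sub_rev]
    have h2η : (0:ℝ) < 2*η := by linarith
    have hAM : ‖xn - xc‖ ≤ 1/(2*η) + (η/2)*‖xn - xc‖^2 := by
      rw [show (1:ℝ)/(2*η) + (η/2)*‖xn - xc‖^2 = (1 + η^2*‖xn - xc‖^2)/(2*η) by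
        field_simp]
      rw [le_div_iff₀ h2η]
      nlinarith [sq_nonneg (η*‖xn - xc‖ - 1)]
    -- inner product algebra
    have hIsplit : ⟪v, xs - xc⟫ = ⟪v, xs - xn⟫ + ⟪v, xn - xc⟫ := by
      rw [← inner_add_right, sub_add_sub_cancel]
    have hIneg : ⟪v, xc - xn⟫ = -⟪v, xn - xc⟫ := by
      rw [← inner_neg_right, neg_sub]
    -- coefficient sign
    have hcoef : (η/2 + γ^2*β^2/2 - α) * ‖xn - xc‖^2 ≤ 0 :=
      mul_nonpos_of_nonpos_of_nonneg (by linarith) (sq_nonneg _)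
    -- assemble
    simp only [hψ_def] at hpush hψxs
    simp only [hP_def]
    rw [← hxc_def, ← hxn_def]
    linarith [hpush, hψxs, hgradineq, hdrift, hsplit, hcross, hlip2, hCS, hAM,
      hIsplit, hIneg, hcoef]
  -- telescoping over the window
  have tele : ∀ k, 1 ≤ k → k ≤ W.card →
      ∑ j ∈ Finset.Ico 1 k, (f (s j) (x (s j)) - f (s j) xs)
        ≤ ((k:ℝ) - 1)/(2*η) + P 1 - P k := by
    intro k hk1
    induction k, hk1 using Nat.le_induction with
    | base => intro _; norm_num
    | succ p hp ih =>
      intro hpN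
      have hih := ih (by omega)
      rw [Finset.sum_Ico_succ_top hp]
      have hkey := key p hp hpN
      have hdiv : (((p:ℝ)+1) - 1)/(2*η) = ((p:ℝ)-1)/(2*η) + 1/(2*η) := by ring
      push_cast
      rw [hdiv]
      linarith
  -- reindex sums over the window
  have hsum : ∀ F : ℕ → ℝ, ∑ t ∈ W, F t = ∑ j ∈ Finset.Icc 1 W.card, F (s j) := by
    intro F
    conv_lhs => rw [hsimg]
    rw [Finset.sum_image]
    intro a ha b hb hab
    exact hsmono.injOn (by simpa using Finset.mem_Icc.1 ha)
      (by simpa using Finset.mem_Icc.1 hb) hab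
  -- last slot bound
  have hlastX : x (s W.card) ∈ X₀ := hxmem W.card hN le_rfl
  have hlastT : s W.card ∈ Finset.Icc 1 T := hsT W.card hN le_rfl
  have hlast : f (s W.card) (x (s W.card)) - f (s W.card) xs
      ≤ 1/(2*η) + α * ‖xs - x (s W.card)‖^2 := by
    have hgi : f (s W.card) (x (s W.card)) + ⟪fgrad (s W.card) (x (s W.card)), xs - x (s W.card)⟫
        ≤ f (s W.card) xs :=
      stmt4_grad_ineq (hfconv _ hlastT) (hfgrad _ hlastT _)
    have hCS : ⟪fgrad (s W.card) (x (s W.card)), x (s W.card) - xs⟫ ≤ ‖xs - x (s W.card)‖ := by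
      calc ⟪fgrad (s W.card) (x (s W.card)), x (s W.card) - xs⟫
          ≤ ‖fgrad (s W.card) (x (s W.card))‖ * ‖x (s W.card) - xs‖ := real_inner_le_norm _ _
        _ ≤ 1 * ‖x (s W.card) - xs‖ :=
            mul_le_mul_of_nonneg_right (hfgradbd _ hlastT _ hlastX) (norm_nonneg _)
        _ = ‖xs - x (s W.card)‖ := by rw [one_mul, norm_sub_rev]
    have hIneg : ⟪fgrad (s W.card) (x (s W.card)), x (s W.card) - xs⟫
        = -⟪fgrad (s W.card) (x (s W.card)), xs - x (s W.card)⟫ := by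
      rw [← inner_neg_right, neg_sub]
    have h2η : (0:ℝ) < 2*η := by linarith
    have hAM : ‖xs - x (s W.card)‖ ≤ 1/(2*η) + (η/2)*‖xs - x (s W.card)‖^2 := by
      rw [show (1:ℝ)/(2*η) + (η/2)*‖xs - x (s W.card)‖^2
          = (1 + η^2*‖xs - x (s W.card)‖^2)/(2*η) by field_simp]
      rw [le_div_iff₀ h2η]
      nlinarith [sq_nonneg (η*‖xs - x (s W.card)‖ - 1)]
    have hηα : (η/2) * ‖xs - x (s W.card)‖^2 ≤ α * ‖xs - x (s W.card)‖^2 := by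
      have : (0:ℝ) ≤ α - η/2 := by nlinarith [sq_nonneg (γ*β)]
      nlinarith [sq_nonneg ‖xs - x (s W.card)‖]
    linarith
  -- potentials at the endpoints
  have hP1 : P 1 = α * ‖xs - x (s 1)‖^2 := by
    have hq1 : ∀ i, (Q 1 i)^2 = (γ * g (x (s 1)) i)^2 := by
      intro i
      have hq := hQ 1 le_rfl hN i
      simp only [Nat.sub_self, hQ0, zero_add] at hq
      rw [hq, max_comm, ← abs_eq_max_neg, sq_abs]
    simp only [hP_def]
    rw [Finset.sum_congr rfl fun i _ => hq1 i]
    ring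
  have hPN : α * ‖xs - x (s W.card)‖^2 ≤ P W.card := by
    have hsq : ∀ i : Fin m, (γ * g (x (s W.card)) i)^2 ≤ (Q W.card i)^2 := by
      intro i
      have h1 := hQlb W.card hN le_rfl i
      calc (γ * g (x (s W.card)) i)^2 = |γ * g (x (s W.card)) i|^2 := (sq_abs _).symm
        _ ≤ (Q W.card i)^2 := by
            have h0 := abs_nonneg (γ * g (x (s W.card)) i)
            nlinarith
    have := Finset.sum_le_sum (fun i (_ : i ∈ Finset.univ) => hsq i)
    simp only [hP_def]
    linarith
  -- final assembly
  have htele := tele W.card hN le_rfl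
  have hsplitN : ∑ j ∈ Finset.Icc 1 W.card, (f (s j) (x (s j)) - f (s j) xs)
      = (∑ j ∈ Finset.Ico 1 W.card, (f (s j) (x (s j)) - f (s j) xs))
        + (f (s W.card) (x (s W.card)) - f (s W.card) xs) := by
    rw [← Finset.Ico_add_one_right_eq_Icc, Finset.sum_Ico_succ_top hN]
  have hmain : ∑ j ∈ Finset.Icc 1 W.card, (f (s j) (x (s j)) - f (s j) xs)
      ≤ α * ‖xs - x (s 1)‖^2 + (W.card : ℝ)/(2*η) := by
    rw [hsplitN]
    have hdiv : ((W.card:ℝ) - 1)/(2*η) + 1/(2*η) = (W.card:ℝ)/(2*η) := by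
      field_simp
      ring
    calc (∑ j ∈ Finset.Ico 1 W.card, (f (s j) (x (s j)) - f (s j) xs))
          + (f (s W.card) (x (s W.card)) - f (s W.card) xs)
        ≤ (((W.card:ℝ) - 1)/(2*η) + P 1 - P W.card)
          + (1/(2*η) + α * ‖xs - x (s W.card)‖^2) := add_le_add htele hlast
      _ ≤ α * ‖xs - x (s 1)‖^2 + (W.card : ℝ)/(2*η) := by
          rw [hP1]
          linarith [hPN, hdiv]
  have h1 : ∑ t ∈ W, f t (x t) = ∑ j ∈ Finset.Icc 1 W.card, f (s j) (x (s j)) :=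
    hsum (fun t => f t (x t))
  have h2 : ∑ t ∈ W, f t xs = ∑ j ∈ Finset.Icc 1 W.card, f (s j) xs :=
    hsum (fun t => f t xs)
  have h3 : ∑ j ∈ Finset.Icc 1 W.card, (f (s j) (x (s j)) - f (s j) xs)
      = (∑ j ∈ Finset.Icc 1 W.card, f (s j) (x (s j)))
        - ∑ j ∈ Finset.Icc 1 W.card, f (s j) xs := Finset.sum_sub_distrib _ _
  rw [h1, h2]
  linarith
end

section
/- (Per-window constraint violation bound, key step in the proof of Theorem 1.) Fix one window W_k of the partition. Let η > 0 and suppose α ≥ (1/2)(γ²β² + η). Then for every constraint index i ∈ {1,…,m}, the iterates produced by running the virtual-queue algorithm along the slots of W_k satisfy Σ_{t ∈ W_k} g_i(x(t)) ≤ 2G₂ + (αG₁² + G₁)/(γ²ε) + 2G₂²/ε; in particular this bound does not depend on the window length |W_k|. -/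
open RealInnerProductSpace

set_option maxHeartbeats 1000000

lemma aux_normsq {m : ℕ} (z : EuclideanSpace ℝ (Fin m)) : ‖z‖^2 = ∑ i, z i^2 := by
  rw [← real_inner_self_eq_norm_sq, PiLp.inner_apply]
  simp [RCLike.inner_apply, sq]

lemma aux_inner {m : ℕ} (u v : EuclideanSpace ℝ (Fin m)) : ∑ i, u i * v i = ⟪u, v⟫ := by
  rw [PiLp.inner_apply]
  simp [RCLike.inner_apply, mul_comm]

lemma aux_sqrt_le_sum {m : ℕ} (q : Fin m → ℝ) (hq : ∀ i, 0 ≤ q i) :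
    Real.sqrt (∑ i, q i ^ 2) ≤ ∑ i, q i := by
  rw [show (∑ i, q i) = Real.sqrt ((∑ i, q i)^2) from
    (Real.sqrt_sq (Finset.sum_nonneg (fun i _ => hq i))).symm]
  exact Real.sqrt_le_sqrt (Finset.sum_sq_le_sq_sum_of_nonneg (fun i _ => hq i))


/-- Per-window constraint violation bound (key step in the proof of Theorem 1):
fix one window `W` of the partition, with slots listed in increasing order as
`s 1 < s 2 < … < s |W|`. If `α ≥ (1/2)(γ²β² + η)`, then for every constraint
index `i` the iterates of the virtual-queue algorithm run along the slots of `W`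
satisfy `Σ_{t ∈ W} g_i(x(t)) ≤ 2G₂ + (αG₁² + G₁)/(γ²ε) + 2G₂²/ε`; in particular
this bound does not depend on the window length `|W|`. -/
theorem stmt5 {n m : ℕ}
    (X₀ : Set (EuclideanSpace ℝ (Fin n))) (hne : X₀.Nonempty)
    (hcomp : IsCompact X₀) (hconv : Convex ℝ X₀)
    (G₁ G₂ β γ ε α η : ℝ) (hG₁ : 0 < G₁)
    (hdiam : ∀ x ∈ X₀, ∀ y ∈ X₀, ‖x - y‖ ≤ G₁)
    (T : ℕ) (hT : 1 ≤ T)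
    (f : ℕ → EuclideanSpace ℝ (Fin n) → ℝ)
    (fgrad : ℕ → EuclideanSpace ℝ (Fin n) → EuclideanSpace ℝ (Fin n))
    (hfconv : ∀ t ∈ Finset.Icc 1 T, ConvexOn ℝ Set.univ (f t))
    (hfgrad : ∀ t ∈ Finset.Icc 1 T, ∀ x, HasGradientAt (f t) (fgrad t x) x)
    (hfgradbd : ∀ t ∈ Finset.Icc 1 T, ∀ x ∈ X₀, ‖fgrad t x‖ ≤ 1)
    (g : EuclideanSpace ℝ (Fin n) → EuclideanSpace ℝ (Fin m))
    (hgconv : ∀ i, ConvexOn ℝ Set.univ (fun x => g x i))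
    (hgbd : ∀ x ∈ X₀, ‖g x‖ ≤ G₂)
    (hglip : ∀ x ∈ X₀, ∀ y ∈ X₀, ‖g x - g y‖ ≤ β * ‖x - y‖)
    (hγ : 0 < γ) (hε : 0 < ε)
    (xhat : EuclideanSpace ℝ (Fin n)) (hxhat : xhat ∈ X₀)
    (hslater : ∀ i, g xhat i ≤ -ε)
    (hη : 0 < η) (hα : (1 / 2) * (γ ^ 2 * β ^ 2 + η) ≤ α)
    -- one window `W` of the partition, with slots enumerated in increasing
    -- order by `s : {1, …, |W|} → W`
    (W : Finset ℕ) (hW : W ⊆ Finset.Icc 1 T) (hWne : W.Nonempty)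
    (s : ℕ → ℕ)
    (hsmono : StrictMonoOn s (Set.Icc 1 W.card))
    (hsimg : W = (Finset.Icc 1 W.card).image s)
    -- the virtual-queue algorithm run along the slots of `W` (queues reset to 0
    -- at the start of the window; `Q j` is the queue after position `j`)
    (x : ℕ → EuclideanSpace ℝ (Fin n))
    (Q : ℕ → Fin m → ℝ)
    (hx1 : x (s 1) ∈ X₀)
    (hQ0 : ∀ i, Q 0 i = 0)
    (hQ : ∀ j, 1 ≤ j → j ≤ W.card → ∀ i,
      Q j i = max (-(γ * g (x (s j)) i)) (Q (j - 1) i + γ * g (x (s j)) i))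
    (hxupd : ∀ j, 1 ≤ j → j + 1 ≤ W.card → x (s (j + 1)) ∈ X₀ ∧
      ∀ z ∈ X₀,
        ⟪fgrad (s j) (x (s j)), x (s (j + 1)) - x (s j)⟫
            + (∑ i, (Q j i + γ * g (x (s j)) i) * (γ * g (x (s (j + 1))) i))
            + α * ‖x (s (j + 1)) - x (s j)‖ ^ 2 ≤
          ⟪fgrad (s j) (x (s j)), z - x (s j)⟫
            + (∑ i, (Q j i + γ * g (x (s j)) i) * (γ * g z i))
            + α * ‖z - x (s j)‖ ^ 2)
    :
    ∀ i, ∑ t ∈ W, g (x t) i ≤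
      2 * G₂ + (α * G₁ ^ 2 + G₁) / (γ ^ 2 * ε) + 2 * G₂ ^ 2 / ε := by
  intro i
  set N := W.card with hNdef
  have hN1 : 1 ≤ N := Finset.card_pos.2 hWne
  have hG₂0 : (0:ℝ) ≤ G₂ := le_trans (norm_nonneg _) (hgbd xhat hxhat)
  have hα0 : (0:ℝ) < α := by nlinarith only [sq_nonneg (γ * β), hα, hη]
  have hαβ : γ ^ 2 * β ^ 2 ≤ 2 * α := by nlinarith only [hα, hη]
  obtain ⟨Gt, hGtdef⟩ : ∃ Gt : ℝ, Gt = γ * G₂ := ⟨_, rfl⟩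
  obtain ⟨εt, hεtdef⟩ : ∃ εt : ℝ, εt = γ * ε := ⟨_, rfl⟩
  have hεt0 : 0 < εt := hεtdef ▸ mul_pos hγ hε
  have hGt0 : 0 ≤ Gt := hGtdef ▸ mul_nonneg hγ.le hG₂0
  obtain ⟨C, hCdef⟩ : ∃ C : ℝ, C = α * G₁ ^ 2 + G₁ + 3 / 2 * Gt ^ 2 := ⟨_, rfl⟩
  have hC0 : 0 < C := by rw [hCdef]; nlinarith only [sq_nonneg Gt, hG₁, mul_pos hα0 (pow_pos hG₁ 2)]
  obtain ⟨θ, hθdef⟩ : ∃ θ : ℝ, θ = C / εt + 2 * Gt := ⟨_, rfl⟩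
  have hCd0 : 0 < C / εt := div_pos hC0 hεt0
  have hθ0 : 0 < θ := by rw [hθdef]; linarith only [hCd0, hGt0]
  -- slots of the window are in the horizon
  have hsW : ∀ j, 1 ≤ j → j ≤ N → s j ∈ Finset.Icc 1 T := by
    intro j h1 h2
    exact hW (hsimg ▸ Finset.mem_image_of_mem s (Finset.mem_Icc.2 ⟨h1, h2⟩))
  -- iterates stay in X₀
  have hxm : ∀ j, 1 ≤ j → j ≤ N → x (s j) ∈ X₀ := by
    intro j
    induction j with
    | zero => intro h; exact absurd h (by omega)
    | succ k ih =>
      intro _ h2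
      rcases Nat.eq_zero_or_pos k with hk | hk
      · subst hk; exact hx1
      · exact (hxupd k hk h2).1
  -- queues are nonnegative
  have hQpos : ∀ j, j ≤ N → ∀ i', 0 ≤ Q j i' := by
    intro j
    induction j with
    | zero => intro _ i'; simp [hQ0]
    | succ k ih =>
      intro h2 i'
      rw [hQ (k + 1) (by omega) h2 i']
      simp only [Nat.add_sub_cancel]
      rcases le_total (γ * g (x (s (k + 1))) i') 0 with h | h
      · exact le_max_of_le_left (by linarith only [h])
      · exact le_max_of_le_right (by linarith only [ih (by omega) i', h])
  -- per-step quadratic growth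
  have hstep : ∀ j, 1 ≤ j → j ≤ N → ∀ i',
      (Q j i') ^ 2 ≤ (Q (j - 1) i' + γ * g (x (s j)) i') ^ 2 + (γ * g (x (s j)) i') ^ 2 := by
    intro j h1 h2 i'
    rw [hQ j h1 h2 i']
    rcases max_choice (-(γ * g (x (s j)) i')) (Q (j - 1) i' + γ * g (x (s j)) i') with hm | hm <;>
      rw [hm] <;> nlinarith only [sq_nonneg (Q (j - 1) i' + γ * g (x (s j)) i'),
        sq_nonneg (γ * g (x (s j)) i')]
  -- the drift inequality
  have hdrift : ∀ j, 1 ≤ j → j + 1 ≤ N →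
      (∑ i', Q (j + 1) i' ^ 2) ≤ (∑ i', Q j i' ^ 2)
        + 2 * (C - εt * Real.sqrt (∑ i', Q j i' ^ 2)) := by
    intro j h1 h2
    have hxj : x (s j) ∈ X₀ := hxm j h1 (by omega)
    have hxj1 : x (s (j + 1)) ∈ X₀ := hxm (j + 1) (by omega) h2
    have hmin' := (hxupd j h1 h2).2 xhat hxhat
    obtain ⟨F, hF⟩ : ∃ F, F = fgrad (s j) (x (s j)) := ⟨_, rfl⟩
    obtain ⟨D, hD⟩ : ∃ D, D = ‖x (s (j + 1)) - x (s j)‖ := ⟨_, rfl⟩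
    obtain ⟨v, hv⟩ : ∃ v, v = g (x (s (j + 1))) := ⟨_, rfl⟩
    obtain ⟨u, hu⟩ : ∃ u, u = g (x (s j)) := ⟨_, rfl⟩
    obtain ⟨w, hw⟩ : ∃ w, w = g xhat := ⟨_, rfl⟩
    rw [← hF, ← hD, ← hv, ← hu, ← hw] at hmin'
    have hD0 : 0 ≤ D := hD ▸ norm_nonneg _
    -- norm bounds in sum form
    have hv2 : (∑ i', v i' ^ 2) ≤ G₂ ^ 2 := by
      rw [← aux_normsq, hv]
      nlinarith only [hgbd _ hxj1, norm_nonneg (g (x (s (j + 1))))]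
    -- (f1): sum expansion of the per-step quadratic growth
    have hf1 : (∑ i', Q (j + 1) i' ^ 2) ≤ (∑ i', Q j i' ^ 2)
        + 2 * (∑ i', Q j i' * (γ * v i')) + 2 * (γ ^ 2 * (∑ i', v i' ^ 2)) := by
      have e1 : (∑ i', Q (j + 1) i' ^ 2)
          ≤ ∑ i', ((Q j i' + γ * v i') ^ 2 + (γ * v i') ^ 2) := by
        refine Finset.sum_le_sum (fun i' _ => ?_)
        have := hstep (j + 1) (by omega) h2 i'
        simpa only [Nat.add_sub_cancel, ← hv] using this
      have e2 : (∑ i', ((Q j i' + γ * v i') ^ 2 + (γ * v i') ^ 2))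
          = (∑ i', Q j i' ^ 2) + 2 * (∑ i', Q j i' * (γ * v i'))
            + 2 * (γ ^ 2 * (∑ i', v i' ^ 2)) := by
        rw [Finset.mul_sum, Finset.mul_sum, Finset.mul_sum, ← Finset.sum_add_distrib,
          ← Finset.sum_add_distrib]
        exact Finset.sum_congr rfl (fun i' _ => by ring)
      linarith only [e1, le_of_eq e2]
    -- (f2): relating the two cross sums
    have hP12 : (∑ i', Q j i' * (γ * v i'))
        = (∑ i', (Q j i' + γ * u i') * (γ * v i')) - γ ^ 2 * (∑ i', u i' * v i') := by
      rw [Finset.mul_sum, ← Finset.sum_sub_distrib]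
      exact Finset.sum_congr rfl (fun i' _ => by ring)
    -- (f3): the minimizer inequality with z = xhat
    have hinner : ⟪F, xhat - x (s j)⟫ - ⟪F, x (s (j + 1)) - x (s j)⟫ ≤ G₁ := by
      have e : ⟪F, xhat - x (s j)⟫ - ⟪F, x (s (j + 1)) - x (s j)⟫
          = ⟪F, xhat - x (s (j + 1))⟫ := by
        simp only [inner_sub_right]; ring
      have c1 : ⟪F, xhat - x (s (j + 1))⟫ ≤ ‖F‖ * ‖xhat - x (s (j + 1))‖ :=
        real_inner_le_norm _ _
      have cF : ‖F‖ ≤ 1 := by rw [hF]; exact hfgradbd _ (hsW j h1 (by omega)) _ hxj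
      have cX : ‖xhat - x (s (j + 1))‖ ≤ G₁ := hdiam _ hxhat _ hxj1
      have c2 : ‖F‖ * ‖xhat - x (s (j + 1))‖ ≤ 1 * G₁ :=
        mul_le_mul cF cX (norm_nonneg _) zero_le_one
      rw [e]
      linarith only [c1, c2]
    have hxhd : α * ‖xhat - x (s j)‖ ^ 2 ≤ α * G₁ ^ 2 := by
      have h1' := hdiam _ hxhat _ hxj
      have h2' : ‖xhat - x (s j)‖ ^ 2 ≤ G₁ ^ 2 := by
        nlinarith only [norm_nonneg (xhat - x (s j)), h1']
      exact mul_le_mul_of_nonneg_left h2' hα0.le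
    have hP2 : (∑ i', (Q j i' + γ * u i') * (γ * v i'))
        ≤ G₁ + (∑ i', (Q j i' + γ * u i') * (γ * w i')) + α * G₁ ^ 2 - α * D ^ 2 := by
      linarith only [hmin', hinner, hxhd]
    -- (f4): Slater bound on the xhat sum
    have hsplit : (∑ i', (Q j i' + γ * u i') * (γ * w i'))
        = (∑ i', Q j i' * (γ * w i')) + γ ^ 2 * (∑ i', u i' * w i') := by
      rw [Finset.mul_sum, ← Finset.sum_add_distrib]
      exact Finset.sum_congr rfl (fun i' _ => by ring)
    have hsq : Real.sqrt (∑ i', Q j i' ^ 2) ≤ ∑ i', Q j i' :=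
      aux_sqrt_le_sum (fun i' => Q j i') (hQpos j (by omega))
    have ht1 : (∑ i', Q j i' * (γ * w i')) ≤ -εt * Real.sqrt (∑ i', Q j i' ^ 2) := by
      have e : (∑ i', Q j i' * (γ * w i')) ≤ ∑ i', Q j i' * (-εt) := by
        refine Finset.sum_le_sum (fun i' _ => ?_)
        apply mul_le_mul_of_nonneg_left _ (hQpos j (by omega) i')
        have h5 : γ * w i' ≤ γ * (-ε) := by
          rw [hw]; exact mul_le_mul_of_nonneg_left (hslater i') hγ.le
        rw [hεtdef]; linarith
      have e2 : (∑ i', Q j i' * (-εt)) = -εt * ∑ i', Q j i' := by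
        rw [Finset.mul_sum]
        exact Finset.sum_congr rfl (fun i' _ => by ring)
      have e3 : εt * Real.sqrt (∑ i', Q j i' ^ 2) ≤ εt * ∑ i', Q j i' :=
        mul_le_mul_of_nonneg_left hsq hεt0.le
      linarith only [e, le_of_eq e2, e3]
    have ht2 : γ ^ 2 * (∑ i', u i' * w i') ≤ Gt ^ 2 := by
      have e := aux_inner u w
      have e2 : ⟪u, w⟫ ≤ ‖u‖ * ‖w‖ := real_inner_le_norm _ _
      have e3 : ‖u‖ ≤ G₂ := by rw [hu]; exact hgbd _ hxj
      have e4 : ‖w‖ ≤ G₂ := by rw [hw]; exact hgbd _ hxhat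
      have e5 : ‖u‖ * ‖w‖ ≤ G₂ * G₂ :=
        mul_le_mul e3 e4 (norm_nonneg _) hG₂0
      have e6 : (∑ i', u i' * w i') ≤ G₂ * G₂ := by
        rw [e]; linarith only [e2, e5]
      calc γ ^ 2 * (∑ i', u i' * w i') ≤ γ ^ 2 * (G₂ * G₂) :=
            mul_le_mul_of_nonneg_left e6 (sq_nonneg γ)
        _ = Gt ^ 2 := by rw [hGtdef]; ring
    -- (f6): Lipschitz cross-term bound
    have hvu : (∑ i', v i' ^ 2) - (∑ i', u i' * v i') ≤ (β * D) * G₂ := by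
      have e1 : (∑ i', v i' ^ 2) - (∑ i', u i' * v i') = ⟪v - u, v⟫ := by
        rw [← aux_inner, ← Finset.sum_sub_distrib]
        refine Finset.sum_congr rfl (fun i' _ => ?_)
        have : (v - u) i' = v i' - u i' := rfl
        rw [this]; ring
      rw [e1]
      have hlip : ‖v - u‖ ≤ β * D := by
        rw [hv, hu, hD]
        exact hglip _ hxj1 _ hxj
      have hvG : ‖v‖ ≤ G₂ := by rw [hv]; exact hgbd _ hxj1
      calc ⟪v - u, v⟫ ≤ ‖v - u‖ * ‖v‖ := real_inner_le_norm _ _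
        _ ≤ (β * D) * G₂ :=
          mul_le_mul hlip hvG (norm_nonneg _) (le_trans (norm_nonneg _) hlip)
    have hf6 : γ ^ 2 * ((∑ i', v i' ^ 2) - (∑ i', u i' * v i')) ≤ α * D ^ 2 + Gt ^ 2 / 2 := by
      have h1 : γ ^ 2 * ((∑ i', v i' ^ 2) - (∑ i', u i' * v i')) ≤ γ ^ 2 * ((β * D) * G₂) :=
        mul_le_mul_of_nonneg_left hvu (sq_nonneg γ)
      rw [hGtdef]
      nlinarith only [h1, hαβ, hD0, sq_nonneg (γ * β * D - γ * G₂), sq_nonneg D]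
    -- combine everything
    rw [hCdef]
    linarith only [hf1, hP12, hP2, hsplit, ht1, ht2, hf6]
  -- bound on the queue size, by induction along the window
  have hSb : ∀ j, 1 ≤ j → j ≤ N → (∑ i', Q j i' ^ 2) ≤ θ ^ 2 := by
    intro j
    induction j with
    | zero => intro h; exact absurd h (by omega)
    | succ k ih =>
      intro _ h2
      rcases Nat.eq_zero_or_pos k with hk | hk
      · subst hk
        have hq1 : ∀ i', Q 1 i' = |γ * g (x (s 1)) i'| := by
          intro i'
          rw [hQ 1 le_rfl h2 i']
          have : (1:ℕ) - 1 = 0 := rfl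
          rw [this, hQ0, zero_add, max_comm, ← abs_eq_max_neg]
        have e : (∑ i', Q 1 i' ^ 2) = γ ^ 2 * ∑ i', g (x (s 1)) i' ^ 2 := by
          rw [Finset.mul_sum]
          refine Finset.sum_congr rfl (fun i' _ => ?_)
          rw [hq1 i', sq_abs]; ring
        have e2 : (∑ i', g (x (s 1)) i' ^ 2) ≤ G₂ ^ 2 := by
          rw [← aux_normsq]
          nlinarith only [hgbd _ hx1, norm_nonneg (g (x (s 1)))]
        have e3 : (∑ i', Q 1 i' ^ 2) ≤ Gt ^ 2 := by
          rw [e, hGtdef]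
          calc γ ^ 2 * ∑ i', g (x (s 1)) i' ^ 2 ≤ γ ^ 2 * G₂ ^ 2 :=
                mul_le_mul_of_nonneg_left e2 (sq_nonneg γ)
            _ = (γ * G₂) ^ 2 := by ring
        rw [hθdef]
        nlinarith only [e3, hCd0, hGt0]
      · have ihS := ih hk (by omega)
        have hS0 : (0:ℝ) ≤ ∑ i', Q k i' ^ 2 :=
          Finset.sum_nonneg (fun _ _ => sq_nonneg _)
        have hsqrt0 : 0 ≤ Real.sqrt (∑ i', Q k i' ^ 2) := Real.sqrt_nonneg _
        rcases le_or_gt (C / εt) (Real.sqrt (∑ i', Q k i' ^ 2)) with hc | hc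
        · have hd := hdrift k hk h2
          have hce : C ≤ εt * Real.sqrt (∑ i', Q k i' ^ 2) := by
            have : εt * (C / εt) ≤ εt * Real.sqrt (∑ i', Q k i' ^ 2) :=
              mul_le_mul_of_nonneg_left hc hεt0.le
            rwa [mul_div_cancel₀ _ hεt0.ne'] at this
          linarith only [hd, ihS, hce]
        · -- bounded increment case
          obtain ⟨v, hv⟩ : ∃ v, v = g (x (s (k + 1))) := ⟨_, rfl⟩
          have hxk1 : x (s (k + 1)) ∈ X₀ := hxm (k + 1) (by omega) h2
          have hv2 : (∑ i', v i' ^ 2) ≤ G₂ ^ 2 := by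
            rw [← aux_normsq, hv]
            nlinarith [hgbd _ hxk1, norm_nonneg (g (x (s (k + 1))))]
          obtain ⟨qv, hqv⟩ : ∃ qv : EuclideanSpace ℝ (Fin m),
              qv = (WithLp.equiv 2 (Fin m → ℝ)).symm (Q k) := ⟨_, rfl⟩
          have hqvapp : ∀ i', qv i' = Q k i' := fun i' => by rw [hqv]; rfl
          have hqvn : ‖qv‖ = Real.sqrt (∑ i', Q k i' ^ 2) := by
            have h' : ‖qv‖ ^ 2 = ∑ i', Q k i' ^ 2 := by
              rw [aux_normsq]
              exact Finset.sum_congr rfl (fun i' _ => by rw [hqvapp])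
            rw [← h', Real.sqrt_sq (norm_nonneg _)]
          have e1 : (∑ i', Q (k + 1) i' ^ 2)
              ≤ (∑ i', (Q k i' + γ * v i') ^ 2) + ∑ i', (γ * v i') ^ 2 := by
            rw [← Finset.sum_add_distrib]
            refine Finset.sum_le_sum (fun i' _ => ?_)
            have := hstep (k + 1) (by omega) h2 i'
            simpa only [Nat.add_sub_cancel, ← hv] using this
          have e2 : (∑ i', (Q k i' + γ * v i') ^ 2) = ‖qv + γ • v‖ ^ 2 := by
            rw [aux_normsq]
            refine Finset.sum_congr rfl (fun i' _ => ?_)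
            have e : (qv + γ • v) i' = Q k i' + γ * v i' := by
              rw [PiLp.add_apply, PiLp.smul_apply, hqvapp, smul_eq_mul]
            rw [e]
          have e3 : ‖qv + γ • v‖ ≤ Real.sqrt (∑ i', Q k i' ^ 2) + Gt := by
            calc ‖qv + γ • v‖ ≤ ‖qv‖ + ‖γ • v‖ := norm_add_le _ _
              _ = Real.sqrt (∑ i', Q k i' ^ 2) + γ * ‖v‖ := by
                rw [hqvn, norm_smul, Real.norm_eq_abs, abs_of_pos hγ]
              _ ≤ Real.sqrt (∑ i', Q k i' ^ 2) + Gt := by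
                have e' : γ * ‖v‖ ≤ γ * G₂ := by
                  rw [hv]; exact mul_le_mul_of_nonneg_left (hgbd _ hxk1) hγ.le
                rw [hGtdef]
                linarith only [e']
          have e4 : ‖qv + γ • v‖ ^ 2 ≤ (Real.sqrt (∑ i', Q k i' ^ 2) + Gt) ^ 2 :=
            pow_le_pow_left₀ (norm_nonneg _) e3 2
          have e5 : (∑ i', (γ * v i') ^ 2) ≤ Gt ^ 2 := by
            have : (∑ i', (γ * v i') ^ 2) = γ ^ 2 * ∑ i', v i' ^ 2 := by
              rw [Finset.mul_sum]
              exact Finset.sum_congr rfl (fun i' _ => by ring)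
            rw [this, hGtdef]
            calc γ ^ 2 * ∑ i', v i' ^ 2 ≤ γ ^ 2 * G₂ ^ 2 :=
                  mul_le_mul_of_nonneg_left hv2 (sq_nonneg γ)
              _ = (γ * G₂) ^ 2 := by ring
          have hsq2 : Real.sqrt (∑ i', Q k i' ^ 2) ^ 2 = ∑ i', Q k i' ^ 2 :=
            Real.sq_sqrt hS0
          rw [hθdef]
          nlinarith only [e1, le_of_eq e2, e4, e5, hsqrt0, hGt0, hc.le, hCd0.le, hsq2]
  -- final queue bound on the single component i
  have hQN : Q N i ≤ θ := by
    have h1 := hSb N hN1 le_rfl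
    have h2 : (Q N i) ^ 2 ≤ ∑ i', Q N i' ^ 2 :=
      Finset.single_le_sum (fun i' _ => sq_nonneg (Q N i')) (Finset.mem_univ i)
    nlinarith only [h1, h2, hQpos N le_rfl i, hθ0]
  -- telescoping
  have htel : ∀ k, k ≤ N → (∑ j ∈ Finset.Icc 1 k, γ * g (x (s j)) i) ≤ Q k i := by
    intro k
    induction k with
    | zero => intro _; simp [hQ0]
    | succ k ih =>
      intro h2
      rw [Finset.sum_Icc_succ_top (by omega : 1 ≤ k + 1)]
      have h3 := hQ (k + 1) (by omega) h2 i
      have h4 := le_max_right (-(γ * g (x (s (k + 1))) i))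
        (Q (k + 1 - 1) i + γ * g (x (s (k + 1))) i)
      rw [← h3] at h4
      simp only [Nat.add_sub_cancel] at h4
      have h5 := ih (by omega)
      linarith only [h4, h5]
  -- rewriting the window sum through the enumeration
  have hconv2 : (∑ t ∈ W, g (x t) i) = ∑ j ∈ Finset.Icc 1 N, g (x (s j)) i := by
    conv_lhs => rw [hsimg]
    refine Finset.sum_image (fun a ha b hb hab => ?_)
    exact hsmono.injOn (Set.mem_Icc.2 (Finset.mem_Icc.1 ha))
      (Set.mem_Icc.2 (Finset.mem_Icc.1 hb)) hab
  have hγsum : γ * (∑ j ∈ Finset.Icc 1 N, g (x (s j)) i) ≤ θ := by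
    rw [Finset.mul_sum]
    exact le_trans (htel N le_rfl) hQN
  -- final arithmetic comparison
  have hfin : θ ≤ γ * (2 * G₂ + (α * G₁ ^ 2 + G₁) / (γ ^ 2 * ε) + 2 * G₂ ^ 2 / ε) := by
    have key : γ * (2 * G₂ + (α * G₁ ^ 2 + G₁) / (γ ^ 2 * ε) + 2 * G₂ ^ 2 / ε) - θ
        = γ * G₂ ^ 2 / (2 * ε) := by
      rw [hθdef, hCdef, hεtdef, hGtdef]
      field_simp
      ring
    have hpos : (0:ℝ) ≤ γ * G₂ ^ 2 / (2 * ε) := by positivity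
    linarith only [key, hpos]
  rw [hconv2]
  have := le_trans hγsum hfin
  exact le_of_mul_le_mul_left this hγ
end

section
/- (Theorem 1, part 1: sublinear pattern-aware regret.) For each window k, let x*(k) ∈ X₀ satisfy g_i(x*(k)) ≤ 0 for all i. Choose the parameters γ = T^{1/4}, η = √T, and α = (1/2)(β² + 1)·√T. Then for all T ≥ 1 the pattern-aware online energy scheduling algorithm satisfies Σ_{k=1}^K Σ_{t ∈ W_k} f^t(x(t)) ≤ Σ_{k=1}^K Σ_{t ∈ W_k} f^t(x*(k)) + ( K·(β² + 1)·G₁²/2 + 1/2 )·√T; in particular the pattern-aware regret Σ_{k=1}^K Σ_{t ∈ W_k} [f^t(x(t)) − f^t(x*(k))] is O(√T). -/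
open RealInnerProductSpace

lemma aux_combo {E : Type*} [NormedAddCommGroup E] [InnerProductSpace ℝ E] (u w : E) (θ : ℝ) :
    ‖(1 - θ) • u + θ • w‖ ^ 2
      = (1 - θ) * ‖u‖ ^ 2 + θ * ‖w‖ ^ 2 - θ * (1 - θ) * ‖u - w‖ ^ 2 := by
  have h1 : ∀ v : E, ‖v‖ ^ 2 = ⟪v, v⟫ := fun v => (real_inner_self_eq_norm_sq v).symm
  simp only [h1]
  simp only [real_inner_add_add_self, real_inner_sub_sub_self, real_inner_smul_left,
    real_inner_smul_right]
  ring

lemma aux_strong_min {E : Type*} [NormedAddCommGroup E] [InnerProductSpace ℝ E]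
    {S : Set E} (hS : Convex ℝ S) {ψ : E → ℝ} (hψ : ConvexOn ℝ Set.univ ψ)
    {α : ℝ} (hα : 0 < α) (x₀ xm : E) (hxm : xm ∈ S)
    (hmin : ∀ w ∈ S, ψ xm + α * ‖xm - x₀‖ ^ 2 ≤ ψ w + α * ‖w - x₀‖ ^ 2)
    {z : E} (hz : z ∈ S) :
    ψ xm + α * ‖xm - x₀‖ ^ 2 + α * ‖z - xm‖ ^ 2 ≤ ψ z + α * ‖z - x₀‖ ^ 2 := by
  have key : ∀ θ : ℝ, 0 < θ → θ ≤ 1 →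
      ψ xm + α * ‖xm - x₀‖ ^ 2 + (1 - θ) * (α * ‖xm - z‖ ^ 2)
        ≤ ψ z + α * ‖z - x₀‖ ^ 2 := by
    intro θ hθ0 hθ1
    have hw : (1 - θ) • xm + θ • z ∈ S := hS hxm hz (by linarith) hθ0.le (by ring)
    have h1 := hmin _ hw
    have h2 : ψ ((1 - θ) • xm + θ • z) ≤ (1 - θ) * ψ xm + θ * ψ z := by
      have := hψ.2 (Set.mem_univ xm) (Set.mem_univ z) (by linarith : (0:ℝ) ≤ 1 - θ) hθ0.le
        (by ring)
      simpa [smul_eq_mul] using this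
    have hvec : (1 - θ) • xm + θ • z - x₀ = (1 - θ) • (xm - x₀) + θ • (z - x₀) := by
      module
    have h3 : ‖(1 - θ) • xm + θ • z - x₀‖ ^ 2
        = (1 - θ) * ‖xm - x₀‖ ^ 2 + θ * ‖z - x₀‖ ^ 2
          - θ * (1 - θ) * ‖xm - z‖ ^ 2 := by
      rw [hvec, aux_combo, sub_sub_sub_cancel_right]
    rw [h3] at h1
    have hθineq : θ * (ψ xm + α * ‖xm - x₀‖ ^ 2 + (1 - θ) * (α * ‖xm - z‖ ^ 2))
        ≤ θ * (ψ z + α * ‖z - x₀‖ ^ 2) := by nlinarith [h1, h2]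
    exact le_of_mul_le_mul_left hθineq hθ0
  have hCeq : ‖z - xm‖ = ‖xm - z‖ := norm_sub_rev _ _
  rw [hCeq]
  by_contra hcon
  push_neg at hcon
  have hCnn : 0 ≤ α * ‖xm - z‖ ^ 2 := by positivity
  set c := α * ‖xm - z‖ ^ 2 with hc
  set E₀ := ψ xm + α * ‖xm - x₀‖ ^ 2 + c - (ψ z + α * ‖z - x₀‖ ^ 2) with hE₀
  have hE : 0 < E₀ := by rw [hE₀]; linarith
  have hθ0 : 0 < min 1 (E₀ / (c + 1)) := lt_min one_pos (div_pos hE (by linarith))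
  have hk := key _ hθ0 (min_le_left _ _)
  have h5 : E₀ ≤ min 1 (E₀ / (c + 1)) * c := by
    rw [hE₀]; nlinarith [hk]
  have h6 : min 1 (E₀ / (c + 1)) * c ≤ (E₀ / (c + 1)) * c :=
    mul_le_mul_of_nonneg_right (min_le_right _ _) hCnn
  have h7 : (E₀ / (c + 1)) * c < E₀ := by
    rw [div_mul_eq_mul_div, div_lt_iff₀ (by linarith)]
    nlinarith
  linarith

lemma aux_grad {E : Type*} [NormedAddCommGroup E] [InnerProductSpace ℝ E] [CompleteSpace E]
    {f : E → ℝ} (hf : ConvexOn ℝ Set.univ f) {x G : E} (hG : HasGradientAt f G x) (y : E) :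
    f x + ⟪G, y - x⟫ ≤ f y := by
  have hcurve : HasDerivAt (fun t : ℝ => x + t • (y - x)) (y - x) 0 := by
    have h := ((hasDerivAt_id (0 : ℝ)).smul_const (y - x)).const_add x
    simpa using h
  have hF : HasFDerivAt f ((InnerProductSpace.toDual ℝ E) G)
      ((fun t : ℝ => x + t • (y - x)) 0) := by
    simpa using hG.hasFDerivAt
  have hcomp : HasDerivAt (fun t : ℝ => f (x + t • (y - x))) ⟪G, y - x⟫ 0 := by
    have h := HasFDerivAt.comp_hasDerivAt 0 hF hcurve
    rw [InnerProductSpace.toDual_apply_apply] at h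
    exact h
  have hten : Filter.Tendsto (slope (fun t : ℝ => f (x + t • (y - x))) 0)
      (nhdsWithin 0 (Set.Ioi 0)) (nhds ⟪G, y - x⟫) := by
    have h := hasDerivAt_iff_tendsto_slope.mp hcomp
    exact h.mono_left (nhdsWithin_mono _ (fun t ht => Set.mem_compl_singleton_iff.mpr (ne_of_gt ht)))
  have hev : ∀ᶠ t in nhdsWithin (0:ℝ) (Set.Ioi 0),
      slope (fun t : ℝ => f (x + t • (y - x))) 0 t ≤ f y - f x := by
    filter_upwards [Ioo_mem_nhdsGT_of_mem (Set.left_mem_Ico.mpr one_pos)] with t ht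
    have ht0 : 0 < t := ht.1
    have ht1 : t < 1 := ht.2
    have hcv := hf.2 (Set.mem_univ x) (Set.mem_univ y) (by linarith : (0:ℝ) ≤ 1 - t) ht0.le
      (by ring)
    simp only [smul_eq_mul] at hcv
    have hpt : x + t • (y - x) = (1 - t) • x + t • y := by
      rw [smul_sub, sub_smul, one_smul]; abel
    have hsl : slope (fun t : ℝ => f (x + t • (y - x))) 0 t
        = (f ((1 - t) • x + t • y) - f x) / t := by
      rw [slope_def_field]
      simp only [zero_smul, add_zero, sub_zero]
      rw [hpt]
    rw [hsl, div_le_iff₀ ht0]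
    nlinarith [hcv]
  have hle := le_of_tendsto hten hev
  linarith

lemma aux_sumsq {m : ℕ} (w : EuclideanSpace ℝ (Fin m)) :
    ∑ i, (w i) ^ 2 = ‖w‖ ^ 2 := by
  rw [EuclideanSpace.norm_eq, Real.sq_sqrt (by positivity)]
  simp [sq_abs]

lemma aux_convexOn_finsum {E : Type*} [AddCommMonoid E] [Module ℝ E] {ι : Type*}
    (t : Finset ι) (F : ι → E → ℝ) (h : ∀ i ∈ t, ConvexOn ℝ Set.univ (F i)) :
    ConvexOn ℝ Set.univ fun w => ∑ i ∈ t, F i w := by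
  classical
  induction t using Finset.induction_on with
  | empty => simpa using convexOn_const (0:ℝ) convex_univ
  | @insert a t ha ih =>
    simp only [Finset.sum_insert ha]
    exact (h _ (Finset.mem_insert_self _ _)).add (ih fun i hi => h i (Finset.mem_insert_of_mem hi))

lemma aux_convexOn_comb {n m : ℕ} (C P : EuclideanSpace ℝ (Fin n))
    (g : EuclideanSpace ℝ (Fin n) → EuclideanSpace ℝ (Fin m))
    (hg : ∀ i, ConvexOn ℝ Set.univ (fun w => g w i))
    (a : Fin m → ℝ) (ha : ∀ i, 0 ≤ a i) (γ : ℝ) (hγ : 0 ≤ γ) :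
    ConvexOn ℝ Set.univ (fun w => ⟪C, w - P⟫ + ∑ i, a i * (γ * g w i)) := by
  apply ConvexOn.add
  · refine ⟨convex_univ, fun u _ v _ ta tb hta htb htab => ?_⟩
    simp only [smul_eq_mul, inner_sub_right, inner_add_right, real_inner_smul_right]
    linear_combination (⟪C, P⟫ : ℝ) * htab
  · apply aux_convexOn_finsum
    intro i _
    have h := (hg i).smul (mul_nonneg (ha i) hγ)
    simpa [smul_eq_mul, mul_assoc] using h

set_option maxHeartbeats 2000000 in
/-- Theorem 1, part 1 (sublinear pattern-aware regret): with the parameter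
choices `γ = T^{1/4}`, `η = √T`, `α = (1/2)(β² + 1)√T`, the pattern-aware online
energy scheduling algorithm — the virtual-queue algorithm run independently
within each window `W_k` of the partition `{W_1,…,W_K}` of `{1,…,T}` — satisfies
`Σ_{k=1}^K Σ_{t ∈ W_k} f^t(x(t)) ≤ Σ_{k=1}^K Σ_{t ∈ W_k} f^t(x*(k))
  + (K(β²+1)G₁²/2 + 1/2)·√T`
for any per-window feasible comparators `x*(k) ∈ X₀` with `g_i(x*(k)) ≤ 0`;
in particular the pattern-aware regret is `O(√T)`. -/
theorem stmt6 {n m : ℕ}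
    (X₀ : Set (EuclideanSpace ℝ (Fin n))) (hne : X₀.Nonempty)
    (hcomp : IsCompact X₀) (hconv : Convex ℝ X₀)
    (G₁ G₂ β γ ε α η : ℝ) (hG₁ : 0 < G₁)
    (hdiam : ∀ x ∈ X₀, ∀ y ∈ X₀, ‖x - y‖ ≤ G₁)
    (T : ℕ) (hT : 1 ≤ T)
    -- parameter choices: γ = T^{1/4}, η = √T, α = (1/2)(β² + 1)√T
    (hγ : γ = (T : ℝ) ^ ((1 : ℝ) / 4))
    (hη : η = Real.sqrt T)
    (hα : α = (1 / 2) * (β ^ 2 + 1) * Real.sqrt T)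
    (f : ℕ → EuclideanSpace ℝ (Fin n) → ℝ)
    (fgrad : ℕ → EuclideanSpace ℝ (Fin n) → EuclideanSpace ℝ (Fin n))
    (hfconv : ∀ t ∈ Finset.Icc 1 T, ConvexOn ℝ Set.univ (f t))
    (hfgrad : ∀ t ∈ Finset.Icc 1 T, ∀ x, HasGradientAt (f t) (fgrad t x) x)
    (hfgradbd : ∀ t ∈ Finset.Icc 1 T, ∀ x ∈ X₀, ‖fgrad t x‖ ≤ 1)
    (g : EuclideanSpace ℝ (Fin n) → EuclideanSpace ℝ (Fin m))
    (hgconv : ∀ i, ConvexOn ℝ Set.univ (fun x => g x i))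
    (hgbd : ∀ x ∈ X₀, ‖g x‖ ≤ G₂)
    (hglip : ∀ x ∈ X₀, ∀ y ∈ X₀, ‖g x - g y‖ ≤ β * ‖x - y‖)
    (hε : 0 < ε)
    (xhat : EuclideanSpace ℝ (Fin n)) (hxhat : xhat ∈ X₀)
    (hslater : ∀ i, g xhat i ≤ -ε)
    -- the partition {W_1, …, W_K} of the time slots {1, …, T}, each window
    -- enumerated in increasing order by `s k : {1, …, |W_k|} → W_k`
    (K : ℕ) (hK : 1 ≤ K)
    (W : ℕ → Finset ℕ)
    (hWne : ∀ k ∈ Finset.Icc 1 K, (W k).Nonempty)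
    (hWdisj : ∀ k ∈ Finset.Icc 1 K, ∀ k' ∈ Finset.Icc 1 K, k ≠ k' →
      Disjoint (W k) (W k'))
    (hWcover : (Finset.Icc 1 K).biUnion W = Finset.Icc 1 T)
    (s : ℕ → ℕ → ℕ)
    (hsmono : ∀ k ∈ Finset.Icc 1 K, StrictMonoOn (s k) (Set.Icc 1 (W k).card))
    (hsimg : ∀ k ∈ Finset.Icc 1 K, W k = (Finset.Icc 1 (W k).card).image (s k))
    -- the virtual-queue algorithm run independently within each window
    -- (queues reset to 0 at the start of each window)
    (x : ℕ → EuclideanSpace ℝ (Fin n))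
    (Q : ℕ → ℕ → Fin m → ℝ)
    (hx1 : ∀ k ∈ Finset.Icc 1 K, x (s k 1) ∈ X₀)
    (hQ0 : ∀ k ∈ Finset.Icc 1 K, ∀ i, Q k 0 i = 0)
    (hQ : ∀ k ∈ Finset.Icc 1 K, ∀ j, 1 ≤ j → j ≤ (W k).card → ∀ i,
      Q k j i = max (-(γ * g (x (s k j)) i)) (Q k (j - 1) i + γ * g (x (s k j)) i))
    (hxupd : ∀ k ∈ Finset.Icc 1 K, ∀ j, 1 ≤ j → j + 1 ≤ (W k).card →
      x (s k (j + 1)) ∈ X₀ ∧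
      ∀ z ∈ X₀,
        ⟪fgrad (s k j) (x (s k j)), x (s k (j + 1)) - x (s k j)⟫
            + (∑ i, (Q k j i + γ * g (x (s k j)) i) * (γ * g (x (s k (j + 1))) i))
            + α * ‖x (s k (j + 1)) - x (s k j)‖ ^ 2 ≤
          ⟪fgrad (s k j) (x (s k j)), z - x (s k j)⟫
            + (∑ i, (Q k j i + γ * g (x (s k j)) i) * (γ * g z i))
            + α * ‖z - x (s k j)‖ ^ 2)
    -- per-window feasible comparators x*(k)
    (xs : ℕ → EuclideanSpace ℝ (Fin n))
    (hxs : ∀ k ∈ Finset.Icc 1 K, xs k ∈ X₀)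
    (hfeas : ∀ k ∈ Finset.Icc 1 K, ∀ i, g (xs k) i ≤ 0) :
    ∑ k ∈ Finset.Icc 1 K, ∑ t ∈ W k, f t (x t) ≤
      ∑ k ∈ Finset.Icc 1 K, ∑ t ∈ W k, f t (xs k)
        + ((K : ℝ) * (β ^ 2 + 1) * G₁ ^ 2 / 2 + 1 / 2) * Real.sqrt T := by
  classical
  have hT1 : (1:ℝ) ≤ (T:ℝ) := by exact_mod_cast hT
  have hT0 : (0:ℝ) < (T:ℝ) := by linarith
  set sT := Real.sqrt (T:ℝ) with hsTdef
  have hsT1 : 1 ≤ sT := by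
    rw [hsTdef, ← Real.sqrt_one]
    exact Real.sqrt_le_sqrt hT1
  have hsT0 : 0 < sT := lt_of_lt_of_le one_pos hsT1
  have hγ2 : γ ^ 2 = sT := by
    rw [hγ, hsTdef, Real.sqrt_eq_rpow, ← Real.rpow_natCast ((T:ℝ) ^ ((1:ℝ)/4)) 2,
      ← Real.rpow_mul hT0.le]
    norm_num
  have hγ0 : 0 < γ := by rw [hγ]; exact Real.rpow_pos_of_pos hT0 _
  have hβ1 : (1:ℝ) ≤ β ^ 2 + 1 := by nlinarith [sq_nonneg β]
  have hα0 : 0 < α := by rw [hα]; nlinarith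
  set c₀ : ℝ := 1 / (2 * sT) with hc₀def
  have hc₀nn : 0 ≤ c₀ := by rw [hc₀def]; positivity
  have hWsub : ∀ k ∈ Finset.Icc 1 K, W k ⊆ Finset.Icc 1 T := by
    intro k hk
    rw [← hWcover]
    exact Finset.subset_biUnion_of_mem W hk
  have hwin : ∀ k ∈ Finset.Icc 1 K,
      (∑ t ∈ W k, f t (x t)) - (∑ t ∈ W k, f t (xs k))
        ≤ ((W k).card : ℝ) * c₀ + α * G₁ ^ 2 := by
    intro k hk
    set J := (W k).card with hJdef
    have hJ1 : 1 ≤ J := Finset.card_pos.mpr (hWne k hk)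
    have hzX : xs k ∈ X₀ := hxs k hk
    have hXmem : ∀ j, 1 ≤ j → j ≤ J → x (s k j) ∈ X₀ := by
      intro j hj1
      induction j, hj1 using Nat.le_induction with
      | base => intro _; exact hx1 k hk
      | succ i hi ih => intro hij; exact (hxupd k hk i hi hij).1
    have hsmemT : ∀ j, 1 ≤ j → j ≤ J → s k j ∈ Finset.Icc 1 T := by
      intro j h1 h2
      apply hWsub k hk
      rw [hsimg k hk]
      exact Finset.mem_image_of_mem _ (Finset.mem_Icc.mpr ⟨h1, h2⟩)
    have hQnn : ∀ j, j ≤ J → ∀ i, 0 ≤ Q k j i := by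
      intro j
      induction j with
      | zero => intro _ i; rw [hQ0 k hk i]
      | succ p ih =>
        intro hpJ i
        rw [hQ k hk (p+1) (by omega) (by omega) i, Nat.add_sub_cancel]
        have hp := ih (by omega) i
        rcases le_or_gt 0 (γ * g (x (s k (p+1))) i) with h|h
        · exact le_max_of_le_right (by linarith)
        · exact le_max_of_le_left (by linarith)
    have hQabs : ∀ j, 1 ≤ j → j ≤ J → ∀ i, |γ * g (x (s k j)) i| ≤ Q k j i := by
      intro j hj1 hjJ i
      rw [hQ k hk j hj1 (by omega) i]
      have hp := hQnn (j-1) (by omega) i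
      rcases abs_cases (γ * g (x (s k j)) i) with ⟨h,_⟩|⟨h,_⟩
      · rw [h]; exact le_max_of_le_right (by linarith)
      · rw [h]; exact le_max_of_le_left (by linarith)
    set L : ℕ → ℝ := fun jj => 1/2 * ∑ i, (Q k jj i)^2 with hLdef
    set V : ℕ → ℝ := fun jj => 1/2 * ∑ i, (γ * g (x (s k jj)) i)^2 with hVdef
    set φ : ℕ → ℝ := fun jj => α * ‖xs k - x (s k jj)‖^2 + L jj - V jj with hφdef
    have hLV : ∀ j, 1 ≤ j → j ≤ J → V j ≤ L j := by
      intro j h1 h2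
      simp only [hVdef, hLdef]
      have hper : ∀ i : Fin m, (γ * g (x (s k j)) i)^2 ≤ (Q k j i)^2 := by
        intro i
        have h := hQabs j h1 h2 i
        have h2' := abs_nonneg (γ * g (x (s k j)) i)
        have h3 : |γ * g (x (s k j)) i| * |γ * g (x (s k j)) i| ≤ Q k j i * Q k j i :=
          mul_le_mul h h h2' (h2'.trans h)
        nlinarith [sq_abs (γ * g (x (s k j)) i)]
      have := Finset.sum_le_sum (fun i (_ : i ∈ Finset.univ) => hper i)
      linarith
    have hφ1 : φ 1 ≤ α * G₁^2 := by
      have hL1 : L 1 = V 1 := by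
        simp only [hLdef, hVdef]
        congr 1
        apply Finset.sum_congr rfl
        intro i _
        have h0 := hQ0 k hk i
        rw [hQ k hk 1 le_rfl (by omega) i]
        norm_num [h0]
        rcases max_choice (-(γ * g (x (s k 1)) i)) (γ * g (x (s k 1)) i) with h|h <;>
          rw [h] <;> ring
      have hd := hdiam (xs k) hzX (x (s k 1)) (hx1 k hk)
      have hsq : ‖xs k - x (s k 1)‖^2 ≤ G₁^2 := by
        nlinarith [norm_nonneg (xs k - x (s k 1))]
      simp only [hφdef]
      nlinarith [hα0.le, hL1, hsq]
    have hstep : ∀ j, 1 ≤ j → j + 1 ≤ J →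
        f (s k j) (x (s k j)) - f (s k j) (xs k) ≤ c₀ + φ j - φ (j+1) := by
      intro j hj1 hjJ
      have tmem : s k j ∈ Finset.Icc 1 T := hsmemT j hj1 (by omega)
      have hPX : x (s k j) ∈ X₀ := hXmem j hj1 (by omega)
      have hP'X : x (s k (j+1)) ∈ X₀ := hXmem (j+1) (by omega) (by omega)
      have ha : ∀ i, 0 ≤ Q k j i + γ * g (x (s k j)) i := fun i => by
        linarith [hQabs j hj1 (by omega : j ≤ J) i, neg_abs_le (γ * g (x (s k j)) i)]
      have hψ : ConvexOn ℝ Set.univ (fun w =>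
          ⟪fgrad (s k j) (x (s k j)), w - x (s k j)⟫
            + ∑ i, (Q k j i + γ * g (x (s k j)) i) * (γ * g w i)) :=
        aux_convexOn_comb _ _ g hgconv _ ha γ hγ0.le
      have hstrong : ⟪fgrad (s k j) (x (s k j)), x (s k (j+1)) - x (s k j)⟫
            + (∑ i, (Q k j i + γ * g (x (s k j)) i) * (γ * g (x (s k (j+1))) i))
            + α * ‖x (s k (j+1)) - x (s k j)‖^2 + α * ‖xs k - x (s k (j+1))‖^2
          ≤ ⟪fgrad (s k j) (x (s k j)), xs k - x (s k j)⟫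
            + (∑ i, (Q k j i + γ * g (x (s k j)) i) * (γ * g (xs k) i))
            + α * ‖xs k - x (s k j)‖^2 :=
        aux_strong_min hconv hψ hα0 (x (s k j)) (x (s k (j+1))) hP'X
          (hxupd k hk j hj1 (by omega)).2 hzX
      have hdrift : 1/2 * (∑ i, (Q k (j+1) i)^2)
          ≤ 1/2 * (∑ i, (Q k j i)^2) + (∑ i, Q k j i * (γ * g (x (s k (j+1))) i))
            + (∑ i, (γ * g (x (s k (j+1))) i)^2) := by
        have hper : ∀ i : Fin m, (Q k (j+1) i)^2
            ≤ (Q k j i)^2 + 2 * (Q k j i * (γ * g (x (s k (j+1))) i))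
              + 2 * ((γ * g (x (s k (j+1))) i)^2) := by
          intro i
          have hq := hQ k hk (j+1) (by omega) (by omega) i
          rw [Nat.add_sub_cancel] at hq
          rw [hq]
          rcases max_choice (-(γ * g (x (s k (j+1))) i)) (Q k j i + γ * g (x (s k (j+1))) i)
            with h|h <;> rw [h] <;> nlinarith [sq_nonneg (Q k j i + γ * g (x (s k (j+1))) i)]
        have hs := Finset.sum_le_sum (fun i (_ : i ∈ Finset.univ) => hper i)
        rw [Finset.sum_add_distrib, Finset.sum_add_distrib, ← Finset.mul_sum,
          ← Finset.mul_sum] at hs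
        linarith
      have hgradineq := aux_grad (hfconv _ tmem) (hfgrad _ tmem (x (s k j))) (xs k)
      have hCS : ⟪fgrad (s k j) (x (s k j)), x (s k j) - x (s k (j+1))⟫
          ≤ ‖x (s k (j+1)) - x (s k j)‖ := by
        have h1 := real_inner_le_norm (fgrad (s k j) (x (s k j))) (x (s k j) - x (s k (j+1)))
        have h2 := hfgradbd _ tmem _ hPX
        have h3 : ‖x (s k j) - x (s k (j+1))‖ = ‖x (s k (j+1)) - x (s k j)‖ :=
          norm_sub_rev _ _
        nlinarith [norm_nonneg (x (s k j) - x (s k (j+1)))]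
      have hinn0 : ⟪fgrad (s k j) (x (s k j)), x (s k j) - x (s k (j+1))⟫
          + ⟪fgrad (s k j) (x (s k j)), x (s k (j+1)) - x (s k j)⟫ = 0 := by
        rw [← inner_add_right]
        simp
      have hS0 : (∑ i, (Q k j i + γ * g (x (s k j)) i) * (γ * g (xs k) i)) ≤ 0 := by
        apply Finset.sum_nonpos
        intro i _
        have h1 := hfeas k hk i
        have h2 := ha i
        have h3 : γ * g (xs k) i ≤ 0 := by nlinarith [hγ0.le]
        nlinarith
      have hsplit : (∑ i, (Q k j i + γ * g (x (s k j)) i) * (γ * g (x (s k (j+1))) i))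
          = (∑ i, Q k j i * (γ * g (x (s k (j+1))) i))
            + (∑ i, (γ * g (x (s k j)) i) * (γ * g (x (s k (j+1))) i)) := by
        rw [← Finset.sum_add_distrib]
        exact Finset.sum_congr rfl fun i _ => by ring
      have hid : (∑ i, (γ * g (x (s k (j+1))) i)^2)
            - (∑ i, (γ * g (x (s k j)) i) * (γ * g (x (s k (j+1))) i))
          = 1/2 * (∑ i, (γ * g (x (s k (j+1))) i)^2)
            - 1/2 * (∑ i, (γ * g (x (s k j)) i)^2)
            + 1/2 * (∑ i, (γ * g (x (s k (j+1))) i - γ * g (x (s k j)) i)^2) := by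
        rw [← Finset.sum_sub_distrib, Finset.mul_sum, Finset.mul_sum, Finset.mul_sum,
          ← Finset.sum_sub_distrib, ← Finset.sum_add_distrib]
        exact Finset.sum_congr rfl fun i _ => by ring
      have hdd : (∑ i, (γ * g (x (s k (j+1))) i - γ * g (x (s k j)) i)^2)
          ≤ γ^2 * β^2 * ‖x (s k (j+1)) - x (s k j)‖^2 := by
        have h1 : (∑ i, (γ * g (x (s k (j+1))) i - γ * g (x (s k j)) i)^2)
            = γ^2 * ‖g (x (s k (j+1))) - g (x (s k j))‖^2 := by
          rw [← aux_sumsq (g (x (s k (j+1))) - g (x (s k j))), Finset.mul_sum]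
          apply Finset.sum_congr rfl
          intro i _
          have hsub : (g (x (s k (j+1))) - g (x (s k j))) i
              = g (x (s k (j+1))) i - g (x (s k j)) i := rfl
          rw [hsub]; ring
        have h2 := hglip (x (s k (j+1))) hP'X (x (s k j)) hPX
        have h3 : ‖g (x (s k (j+1))) - g (x (s k j))‖^2
            ≤ (β * ‖x (s k (j+1)) - x (s k j)‖)^2 :=
          pow_le_pow_left₀ (norm_nonneg _) h2 2
        nlinarith [sq_nonneg γ]
      have hDsq : ‖x (s k (j+1)) - x (s k j)‖ - α * ‖x (s k (j+1)) - x (s k j)‖^2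
          + 1/2 * (γ^2 * β^2 * ‖x (s k (j+1)) - x (s k j)‖^2) ≤ c₀ := by
        rw [hc₀def, le_div_iff₀ (by positivity)]
        rw [hα, hγ2]
        nlinarith [sq_nonneg (sT * ‖x (s k (j+1)) - x (s k j)‖ - 1)]
      simp only [hφdef, hLdef, hVdef]
      linarith [hstrong, hdrift, hgradineq, hCS, hinn0, hS0, hsplit, hid, hdd, hDsq]
    have hlast : f (s k J) (x (s k J)) - f (s k J) (xs k) ≤ c₀ + φ J := by
      have tmem := hsmemT J hJ1 le_rfl
      have hPX := hXmem J hJ1 le_rfl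
      have h1 := aux_grad (hfconv _ tmem) (hfgrad _ tmem (x (s k J))) (xs k)
      have h2 := real_inner_le_norm (fgrad (s k J) (x (s k J))) (xs k - x (s k J))
      have h3 := hfgradbd _ tmem _ hPX
      have h2' := real_inner_le_norm (fgrad (s k J) (x (s k J))) (x (s k J) - xs k)
      have hsym : ‖x (s k J) - xs k‖ = ‖xs k - x (s k J)‖ := norm_sub_rev _ _
      have hinn0 : ⟪fgrad (s k J) (x (s k J)), x (s k J) - xs k⟫
          + ⟪fgrad (s k J) (x (s k J)), xs k - x (s k J)⟫ = 0 := by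
        rw [← inner_add_right]; simp
      have hr : f (s k J) (x (s k J)) - f (s k J) (xs k) ≤ ‖xs k - x (s k J)‖ := by
        nlinarith [norm_nonneg (x (s k J) - xs k)]
      have hq : ‖xs k - x (s k J)‖ ≤ α * ‖xs k - x (s k J)‖^2 + 1/(4*α) := by
        rw [← sub_le_iff_le_add', le_div_iff₀ (by positivity)]
        nlinarith [sq_nonneg (2 * α * ‖xs k - x (s k J)‖ - 1)]
      have hc4 : 1/(4*α) ≤ c₀ := by
        rw [hc₀def]
        exact one_div_le_one_div_of_le (by positivity) (by rw [hα]; nlinarith [hβ1, hsT0])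
      have hLV' := hLV J hJ1 le_rfl
      simp only [hφdef]
      linarith
    have hsum1 : ∀ N, N + 1 ≤ J →
        (∑ jj ∈ Finset.Icc 1 N, (f (s k jj) (x (s k jj)) - f (s k jj) (xs k)))
          ≤ (N : ℝ) * c₀ + φ 1 - φ (N+1) := by
      intro N
      induction N with
      | zero => intro _; norm_num
      | succ p ih =>
        intro hpJ
        rw [Finset.sum_Icc_succ_top (by omega : 1 ≤ p + 1)]
        have h1 := ih (by omega)
        have h2 := hstep (p+1) (by omega) hpJ
        push_cast
        linarith
    have hwinsum : (∑ jj ∈ Finset.Icc 1 J, (f (s k jj) (x (s k jj)) - f (s k jj) (xs k)))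
        ≤ (J : ℝ) * c₀ + α * G₁^2 := by
      have hins : Finset.Icc 1 J = insert J (Finset.Icc 1 (J-1)) := by
        ext a
        simp only [Finset.mem_Icc, Finset.mem_insert]
        omega
      have hnotin : J ∉ Finset.Icc 1 (J-1) := by
        simp only [Finset.mem_Icc]
        omega
      rw [hins, Finset.sum_insert hnotin]
      have h1 := hsum1 (J-1) (by omega)
      have h2 : (J - 1) + 1 = J := by omega
      rw [h2] at h1
      have h3 : ((J-1 : ℕ) : ℝ) = (J:ℝ) - 1 := by
        rw [Nat.cast_sub hJ1]; norm_num
      rw [h3] at h1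
      linarith [hφ1, hlast]
    have himg : ∀ F : ℕ → ℝ, (∑ t ∈ W k, F t) = ∑ jj ∈ Finset.Icc 1 J, F (s k jj) := by
      intro F
      have hinj : ∀ a ∈ Finset.Icc 1 (W k).card, ∀ b ∈ Finset.Icc 1 (W k).card,
          s k a = s k b → a = b := by
        intro a ha b hb hab
        exact (hsmono k hk).injOn (by simpa [Set.mem_Icc] using Finset.mem_Icc.mp ha)
          (by simpa [Set.mem_Icc] using Finset.mem_Icc.mp hb) hab
      conv_lhs => rw [hsimg k hk]
      rw [Finset.sum_image hinj]
    calc (∑ t ∈ W k, f t (x t)) - (∑ t ∈ W k, f t (xs k))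
        = ∑ jj ∈ Finset.Icc 1 J, (f (s k jj) (x (s k jj)) - f (s k jj) (xs k)) := by
          rw [himg (fun t => f t (x t)), himg (fun t => f t (xs k)),
            ← Finset.sum_sub_distrib]
      _ ≤ (J:ℝ) * c₀ + α * G₁^2 := hwinsum
  have hsum := Finset.sum_le_sum hwin
  rw [Finset.sum_sub_distrib] at hsum
  have hcards : (∑ k ∈ Finset.Icc 1 K, ((W k).card : ℝ)) = (T:ℝ) := by
    have h2 : ∑ k ∈ Finset.Icc 1 K, (W k).card = T := by
      rw [← Finset.card_biUnion hWdisj, hWcover, Nat.card_Icc]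
      omega
    rw [← Nat.cast_sum, h2]
  have hRHS : (∑ k ∈ Finset.Icc 1 K, (((W k).card : ℝ) * c₀ + α * G₁ ^ 2))
      = (T:ℝ) * c₀ + (K:ℝ) * (α * G₁^2) := by
    rw [Finset.sum_add_distrib, ← Finset.sum_mul, hcards, Finset.sum_const, Nat.card_Icc,
      Nat.add_sub_cancel, nsmul_eq_mul]
  rw [hRHS] at hsum
  have hfinal : (T:ℝ) * c₀ + (K:ℝ) * (α * G₁^2)
      = ((K:ℝ) * (β^2+1) * G₁^2 / 2 + 1/2) * sT := by
    have hTs : (T:ℝ) = sT * sT := by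
      rw [hsTdef, Real.mul_self_sqrt hT0.le]
    rw [hc₀def, hα, hTs]
    field_simp
    ring
  linarith [hsum, hfinal]
end

section
/- (Theorem 1, part 2: constraint violation bound of the pattern-aware algorithm.) Choose the parameters γ = T^{1/4}, η = √T, and α = (1/2)(β² + 1)·√T. Then for all T ≥ 1 and every constraint index i ∈ {1,…,m}, the iterates of the pattern-aware online energy scheduling algorithm satisfy Σ_{k=1}^K Σ_{t ∈ W_k} g_i(x(t)) ≤ 2K·G₂ + K·( (1/2)(β² + 1)G₁² + G₁ + 2G₂² )/ε + K·G₁/(ε·√T); in particular the time-averaged constraint violation is O(1/√T) up to a constant independent of T and asymptotically the per-slot violation approaches zero. -/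
open RealInnerProductSpace

set_option maxHeartbeats 2000000

/-- Theorem 1, part 2 (constraint violation bound of the pattern-aware
algorithm): with the parameter choices `γ = T^{1/4}`, `η = √T`,
`α = (1/2)(β² + 1)√T`, for all `T ≥ 1` and every constraint index `i`, the
iterates of the pattern-aware online energy scheduling algorithm satisfy
`Σ_{k=1}^K Σ_{t ∈ W_k} g_i(x(t)) ≤ 2KG₂ + K((1/2)(β²+1)G₁² + G₁ + 2G₂²)/ε
  + KG₁/(ε√T)`;
in particular the time-averaged constraint violation is `O(1/√T)` and the
per-slot violation asymptotically approaches zero. -/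
theorem stmt7 {n m : ℕ}
    (X₀ : Set (EuclideanSpace ℝ (Fin n))) (hne : X₀.Nonempty)
    (hcomp : IsCompact X₀) (hconv : Convex ℝ X₀)
    (G₁ G₂ β γ ε α η : ℝ) (hG₁ : 0 < G₁)
    (hdiam : ∀ x ∈ X₀, ∀ y ∈ X₀, ‖x - y‖ ≤ G₁)
    (T : ℕ) (hT : 1 ≤ T)
    -- parameter choices: γ = T^{1/4}, η = √T, α = (1/2)(β² + 1)√T
    (hγ : γ = (T : ℝ) ^ ((1 : ℝ) / 4))
    (hη : η = Real.sqrt T)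
    (hα : α = (1 / 2) * (β ^ 2 + 1) * Real.sqrt T)
    (f : ℕ → EuclideanSpace ℝ (Fin n) → ℝ)
    (fgrad : ℕ → EuclideanSpace ℝ (Fin n) → EuclideanSpace ℝ (Fin n))
    (hfconv : ∀ t ∈ Finset.Icc 1 T, ConvexOn ℝ Set.univ (f t))
    (hfgrad : ∀ t ∈ Finset.Icc 1 T, ∀ x, HasGradientAt (f t) (fgrad t x) x)
    (hfgradbd : ∀ t ∈ Finset.Icc 1 T, ∀ x ∈ X₀, ‖fgrad t x‖ ≤ 1)
    (g : EuclideanSpace ℝ (Fin n) → EuclideanSpace ℝ (Fin m))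
    (hgconv : ∀ i, ConvexOn ℝ Set.univ (fun x => g x i))
    (hgbd : ∀ x ∈ X₀, ‖g x‖ ≤ G₂)
    (hglip : ∀ x ∈ X₀, ∀ y ∈ X₀, ‖g x - g y‖ ≤ β * ‖x - y‖)
    (hε : 0 < ε)
    (xhat : EuclideanSpace ℝ (Fin n)) (hxhat : xhat ∈ X₀)
    (hslater : ∀ i, g xhat i ≤ -ε)
    -- the partition {W_1, …, W_K} of the time slots {1, …, T}, each window
    -- enumerated in increasing order by `s k : {1, …, |W_k|} → W_k`
    (K : ℕ) (hK : 1 ≤ K)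
    (W : ℕ → Finset ℕ)
    (hWne : ∀ k ∈ Finset.Icc 1 K, (W k).Nonempty)
    (hWdisj : ∀ k ∈ Finset.Icc 1 K, ∀ k' ∈ Finset.Icc 1 K, k ≠ k' →
      Disjoint (W k) (W k'))
    (hWcover : (Finset.Icc 1 K).biUnion W = Finset.Icc 1 T)
    (s : ℕ → ℕ → ℕ)
    (hsmono : ∀ k ∈ Finset.Icc 1 K, StrictMonoOn (s k) (Set.Icc 1 (W k).card))
    (hsimg : ∀ k ∈ Finset.Icc 1 K, W k = (Finset.Icc 1 (W k).card).image (s k))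
    -- the virtual-queue algorithm run independently within each window
    -- (queues reset to 0 at the start of each window)
    (x : ℕ → EuclideanSpace ℝ (Fin n))
    (Q : ℕ → ℕ → Fin m → ℝ)
    (hx1 : ∀ k ∈ Finset.Icc 1 K, x (s k 1) ∈ X₀)
    (hQ0 : ∀ k ∈ Finset.Icc 1 K, ∀ i, Q k 0 i = 0)
    (hQ : ∀ k ∈ Finset.Icc 1 K, ∀ j, 1 ≤ j → j ≤ (W k).card → ∀ i,
      Q k j i = max (-(γ * g (x (s k j)) i)) (Q k (j - 1) i + γ * g (x (s k j)) i))
    (hxupd : ∀ k ∈ Finset.Icc 1 K, ∀ j, 1 ≤ j → j + 1 ≤ (W k).card →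
      x (s k (j + 1)) ∈ X₀ ∧
      ∀ z ∈ X₀,
        ⟪fgrad (s k j) (x (s k j)), x (s k (j + 1)) - x (s k j)⟫
            + (∑ i, (Q k j i + γ * g (x (s k j)) i) * (γ * g (x (s k (j + 1))) i))
            + α * ‖x (s k (j + 1)) - x (s k j)‖ ^ 2 ≤
          ⟪fgrad (s k j) (x (s k j)), z - x (s k j)⟫
            + (∑ i, (Q k j i + γ * g (x (s k j)) i) * (γ * g z i))
            + α * ‖z - x (s k j)‖ ^ 2)
    :
    ∀ i, ∑ k ∈ Finset.Icc 1 K, ∑ t ∈ W k, g (x t) i ≤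
      2 * (K : ℝ) * G₂
        + (K : ℝ) * ((1 / 2) * (β ^ 2 + 1) * G₁ ^ 2 + G₁ + 2 * G₂ ^ 2) / ε
        + (K : ℝ) * G₁ / (ε * Real.sqrt T) := by
  intro i0
  have hT1 : (1:ℝ) ≤ (T:ℝ) := by exact_mod_cast hT
  have hst1 : (1:ℝ) ≤ Real.sqrt T := by
    rw [show (1:ℝ) = Real.sqrt 1 by simp]
    exact Real.sqrt_le_sqrt hT1
  have hst0 : (0:ℝ) < Real.sqrt T := lt_of_lt_of_le one_pos hst1
  have hγ0 : (0:ℝ) < γ := by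
    rw [hγ]; exact Real.rpow_pos_of_pos (by linarith) _
  have hγsq : γ ^ 2 = Real.sqrt T := by
    rw [hγ, ← Real.rpow_natCast ((T:ℝ) ^ ((1:ℝ)/4)) 2, ← Real.rpow_mul (by linarith),
      Real.sqrt_eq_rpow]
    norm_num
  have hG₂ : (0:ℝ) ≤ G₂ := le_trans (norm_nonneg _) (hgbd xhat hxhat)
  have hα0 : (0:ℝ) ≤ α := by rw [hα]; positivity
  -- Cauchy–Schwarz for finite sums
  have CS : ∀ u v : Fin m → ℝ, |∑ i, u i * v i| ≤
      Real.sqrt (∑ i, u i ^ 2) * Real.sqrt (∑ i, v i ^ 2) := by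
    intro u v
    have h := Finset.sum_mul_sq_le_sq_mul_sq Finset.univ u v
    have h2 := Real.sqrt_le_sqrt h
    rwa [Real.sqrt_sq_eq_abs, Real.sqrt_mul (Finset.sum_nonneg fun i _ => sq_nonneg _)] at h2
  have hgsq : ∀ y ∈ X₀, ∑ i, (g y i) ^ 2 ≤ G₂ ^ 2 := by
    intro y hy
    have h1 : ‖g y‖ ^ 2 = ∑ i, (g y i) ^ 2 := by
      rw [EuclideanSpace.norm_eq, Real.sq_sqrt (Finset.sum_nonneg fun i _ => sq_nonneg _)]
      simp [sq_abs]
    calc ∑ i, (g y i) ^ 2 = ‖g y‖ ^ 2 := h1.symm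
      _ ≤ G₂ ^ 2 := pow_le_pow_left₀ (norm_nonneg _) (hgbd y hy) 2
  -- the per-window bound
  have main : ∀ k ∈ Finset.Icc 1 K, ∑ t ∈ W k, g (x t) i0 ≤
      2*G₂ + ((1/2)*(β^2+1)*G₁^2 + G₁ + 2*G₂^2)/ε + G₁/(ε*Real.sqrt T) := by
    intro k hk
    have hNpos : 1 ≤ (W k).card := Finset.card_pos.mpr (hWne k hk)
    have hmem : ∀ j, 1 ≤ j → j ≤ (W k).card → x (s k j) ∈ X₀ := by
      intro j hj1 hjN
      cases j with
      | zero => omega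
      | succ j =>
        cases j with
        | zero => exact hx1 k hk
        | succ j => exact (hxupd k hk (j+1) (by omega) hjN).1
    have hWsub : W k ⊆ Finset.Icc 1 T := by
      intro t ht
      rw [← hWcover]
      exact Finset.mem_biUnion.mpr ⟨k, hk, ht⟩
    have hsmem : ∀ j, 1 ≤ j → j ≤ (W k).card → s k j ∈ Finset.Icc 1 T := by
      intro j hj1 hjN
      exact hWsub (by rw [hsimg k hk]
                      exact Finset.mem_image.mpr ⟨j, Finset.mem_Icc.mpr ⟨hj1, hjN⟩, rfl⟩)
    have hQnn : ∀ j, j ≤ (W k).card → ∀ i, 0 ≤ Q k j i := by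
      intro j
      induction j with
      | zero => intro _ i; exact (hQ0 k hk i).ge
      | succ j ih =>
        intro hjN i
        have h1 := ih (by omega) i
        have h2 := hQ k hk (j+1) (by omega) hjN i
        simp only [Nat.add_sub_cancel] at h2
        rw [h2]
        have h3 := le_max_left (-(γ * g (x (s k (j+1))) i)) (Q k j i + γ * g (x (s k (j+1))) i)
        have h4 := le_max_right (-(γ * g (x (s k (j+1))) i)) (Q k j i + γ * g (x (s k (j+1))) i)
        linarith
    have hQrec : ∀ j, j + 1 ≤ (W k).card → ∀ i, Q k (j+1) i =
        max (-(γ * g (x (s k (j+1))) i)) (Q k j i + γ * g (x (s k (j+1))) i) := by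
      intro j hj i
      have h2 := hQ k hk (j+1) (by omega) hj i
      simpa using h2
    have hQg : ∀ j, 1 ≤ j → j ≤ (W k).card → ∀ i,
        0 ≤ Q k j i + γ * g (x (s k j)) i := by
      intro j hj1 hjN i
      have h2 := hQ k hk j hj1 hjN i
      have h3 := le_max_left (-(γ * g (x (s k j)) i)) (Q k (j-1) i + γ * g (x (s k j)) i)
      rw [h2]
      linarith
    have hgt : ∀ j, 1 ≤ j → j ≤ (W k).card →
        ∑ i, (γ * g (x (s k j)) i) ^ 2 ≤ (γ*G₂) ^ 2 := by
      intro j hj1 hjN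
      have h1 := hgsq _ (hmem j hj1 hjN)
      have h2 : ∑ i, (γ * g (x (s k j)) i) ^ 2 = γ^2 * ∑ i, (g (x (s k j)) i) ^ 2 := by
        rw [Finset.mul_sum]
        exact Finset.sum_congr rfl fun i _ => by ring
      rw [h2]
      calc γ^2 * ∑ i, (g (x (s k j)) i)^2 ≤ γ^2 * G₂^2 :=
            mul_le_mul_of_nonneg_left h1 (sq_nonneg γ)
        _ = (γ*G₂)^2 := by ring
    have hrb : ∀ j, 1 ≤ j → j ≤ (W k).card →
        Real.sqrt (∑ i, (γ * g (x (s k j)) i) ^ 2) ≤ γ*G₂ := by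
      intro j hj1 hjN
      have h := Real.sqrt_le_sqrt (hgt j hj1 hjN)
      rwa [Real.sqrt_sq (mul_nonneg hγ0.le hG₂)] at h
    -- step bound on the norm of the queue vector
    have hSstep : ∀ j, j + 1 ≤ (W k).card →
        Real.sqrt (∑ i, Q k (j+1) i ^ 2) ≤ Real.sqrt (∑ i, Q k j i ^ 2) + γ * G₂ := by
      intro j hj
      have hSnn : 0 ≤ Real.sqrt (∑ i, Q k j i ^ 2) := Real.sqrt_nonneg _
      have hSsq : Real.sqrt (∑ i, Q k j i ^ 2) ^ 2 = ∑ i, Q k j i ^ 2 :=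
        Real.sq_sqrt (Finset.sum_nonneg fun i _ => sq_nonneg _)
      have hcomp : ∀ i : Fin m, Q k (j+1) i ^ 2 ≤ (Q k j i + abs (γ * g (x (s k (j+1))) i)) ^ 2 := by
        intro i
        have h0 := hQnn j (by omega) i
        have h1 := hQnn (j+1) hj i
        have h2 := hQrec j hj i
        have hup : Q k (j+1) i ≤ Q k j i + abs (γ * g (x (s k (j+1))) i) := by
          rw [h2]
          apply max_le
          · have h5 := neg_abs_le (γ * g (x (s k (j+1))) i)
            linarith
          · have h5 := le_abs_self (γ * g (x (s k (j+1))) i)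
            linarith
        exact pow_le_pow_left₀ h1 hup 2
      have h6 := Finset.sum_le_sum (fun i (_ : i ∈ Finset.univ) => hcomp i)
      have hexp : ∑ i, (Q k j i + abs (γ * g (x (s k (j+1))) i)) ^ 2
          = ∑ i, Q k j i ^ 2 + 2*(∑ i, Q k j i * abs (γ * g (x (s k (j+1))) i))
            + ∑ i, (abs (γ * g (x (s k (j+1))) i)) ^ 2 := by
        rw [Finset.mul_sum, ← Finset.sum_add_distrib, ← Finset.sum_add_distrib]
        exact Finset.sum_congr rfl fun i _ => by ring
      have habs2 : ∑ i, (abs (γ * g (x (s k (j+1))) i)) ^ 2 = ∑ i, (γ * g (x (s k (j+1))) i) ^ 2 := by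
        simp only [sq_abs]
      have hCSa : abs (∑ i, Q k j i * abs (γ * g (x (s k (j+1))) i)) ≤
          Real.sqrt (∑ i, Q k j i ^ 2) * Real.sqrt (∑ i, (abs (γ * g (x (s k (j+1))) i)) ^ 2) :=
        CS (fun i => Q k j i) (fun i => abs (γ * g (x (s k (j+1))) i))
      rw [habs2] at hCSa
      have hM : ∑ i, Q k j i * abs (γ * g (x (s k (j+1))) i) ≤
          Real.sqrt (∑ i, Q k j i ^ 2) * (γ*G₂) := by
        have h7 := le_abs_self (∑ i, Q k j i * abs (γ * g (x (s k (j+1))) i))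
        have h8 : Real.sqrt (∑ i, Q k j i ^ 2) * Real.sqrt (∑ i, (γ * g (x (s k (j+1))) i) ^ 2)
            ≤ Real.sqrt (∑ i, Q k j i ^ 2) * (γ*G₂) :=
          mul_le_mul_of_nonneg_left (hrb (j+1) (by omega) hj) hSnn
        linarith
      have hgtb := hgt (j+1) (by omega) hj
      have hfin : ∑ i, Q k (j+1) i ^ 2 ≤ (Real.sqrt (∑ i, Q k j i ^ 2) + γ*G₂) ^ 2 := by
        rw [habs2] at hexp
        nlinarith [h6, hexp, hM, hgtb, hSsq]
      have h9 := Real.sqrt_le_sqrt hfin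
      rwa [Real.sqrt_sq (by positivity)] at h9
    -- drift bound
    have hdrift : ∀ j, j + 1 ≤ (W k).card →
        ∑ i, Q k (j+1) i ^ 2 ≤ ∑ i, Q k j i ^ 2
          + 2 * (∑ i, Q k j i * (γ * g (x (s k (j+1))) i)) + 2*(γ*G₂)^2 := by
      intro j hj
      have hc : ∀ i : Fin m, Q k (j+1) i ^ 2 ≤
          (γ * g (x (s k (j+1))) i) ^ 2 + (Q k j i + γ * g (x (s k (j+1))) i) ^ 2 := by
        intro i
        have h2 := hQrec j hj i
        rcases max_choice (-(γ * g (x (s k (j+1))) i)) (Q k j i + γ * g (x (s k (j+1))) i)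
          with h | h <;> rw [h2, h] <;>
          nlinarith [sq_nonneg (Q k j i + γ * g (x (s k (j+1))) i),
            sq_nonneg (γ * g (x (s k (j+1))) i)]
      have h6 := Finset.sum_le_sum (fun i (_ : i ∈ Finset.univ) => hc i)
      have hexp : ∑ i, ((γ * g (x (s k (j+1))) i) ^ 2 + (Q k j i + γ * g (x (s k (j+1))) i) ^ 2)
          = 2 * (∑ i, (γ * g (x (s k (j+1))) i) ^ 2) + ∑ i, Q k j i ^ 2
            + 2 * (∑ i, Q k j i * (γ * g (x (s k (j+1))) i)) := by
        rw [Finset.mul_sum, Finset.mul_sum, ← Finset.sum_add_distrib, ← Finset.sum_add_distrib]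
        exact Finset.sum_congr rfl fun i _ => by ring
      have hgtb := hgt (j+1) (by omega) hj
      linarith [h6, hexp, hgtb]
    -- key inequality from the update rule and the Slater point
    have hkey : ∀ j, 1 ≤ j → j + 1 ≤ (W k).card →
        (∑ i, Q k j i * (γ * g (x (s k (j+1))) i)) ≤
          2*G₁ + α*G₁^2 + γ^2*G₂^2 + γ^2*ε*G₂ - γ*ε * Real.sqrt (∑ i, Q k j i ^ 2) := by
      intro j hj1 hj2
      have hXj := hmem j hj1 (by omega)
      have hXj1 := hmem (j+1) (by omega) hj2
      have hE := (hxupd k hk j hj1 hj2).2 xhat hxhat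
      have hgr : ‖fgrad (s k j) (x (s k j))‖ ≤ 1 := hfgradbd _ (hsmem j hj1 (by omega)) _ hXj
      have hI1 : -G₁ ≤ ⟪fgrad (s k j) (x (s k j)), x (s k (j+1)) - x (s k j)⟫ := by
        have h1 := abs_real_inner_le_norm (fgrad (s k j) (x (s k j))) (x (s k (j+1)) - x (s k j))
        have h2 := hdiam _ hXj1 _ hXj
        have h3 : ‖fgrad (s k j) (x (s k j))‖ * ‖x (s k (j+1)) - x (s k j)‖ ≤ 1 * G₁ :=
          mul_le_mul hgr h2 (norm_nonneg _) zero_le_one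
        have h4 := neg_abs_le ⟪fgrad (s k j) (x (s k j)), x (s k (j+1)) - x (s k j)⟫
        linarith
      have hJ1 : ⟪fgrad (s k j) (x (s k j)), xhat - x (s k j)⟫ ≤ G₁ := by
        have h1 := abs_real_inner_le_norm (fgrad (s k j) (x (s k j))) (xhat - x (s k j))
        have h2 := hdiam _ hxhat _ hXj
        have h3 : ‖fgrad (s k j) (x (s k j))‖ * ‖xhat - x (s k j)‖ ≤ 1 * G₁ :=
          mul_le_mul hgr h2 (norm_nonneg _) zero_le_one
        have h4 := le_abs_self ⟪fgrad (s k j) (x (s k j)), xhat - x (s k j)⟫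
        linarith
      have hJ3 : α * ‖xhat - x (s k j)‖ ^ 2 ≤ α * G₁^2 :=
        mul_le_mul_of_nonneg_left
          (pow_le_pow_left₀ (norm_nonneg _) (hdiam _ hxhat _ hXj) 2) hα0
      have hI3 : 0 ≤ α * ‖x (s k (j+1)) - x (s k j)‖ ^ 2 :=
        mul_nonneg hα0 (by positivity)
      -- split the middle sum
      have hsplit : ∑ i, (Q k j i + γ * g (x (s k j)) i) * (γ * g (x (s k (j+1))) i)
          = (∑ i, Q k j i * (γ * g (x (s k (j+1))) i))
            + ∑ i, (γ * g (x (s k j)) i) * (γ * g (x (s k (j+1))) i) := by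
        rw [← Finset.sum_add_distrib]
        exact Finset.sum_congr rfl fun i _ => by ring
      have hcross : -((γ*G₂)^2) ≤ ∑ i, (γ * g (x (s k j)) i) * (γ * g (x (s k (j+1))) i) := by
        have h1 := CS (fun i => γ * g (x (s k j)) i) (fun i => γ * g (x (s k (j+1))) i)
        have h2 : Real.sqrt (∑ i, (γ * g (x (s k j)) i) ^ 2) *
              Real.sqrt (∑ i, (γ * g (x (s k (j+1))) i) ^ 2) ≤ (γ*G₂) * (γ*G₂) :=
          mul_le_mul (hrb j hj1 (by omega)) (hrb (j+1) (by omega) hj2)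
            (Real.sqrt_nonneg _) (mul_nonneg hγ0.le hG₂)
        have h3 := neg_abs_le (∑ i, (γ * g (x (s k j)) i) * (γ * g (x (s k (j+1))) i))
        nlinarith
      -- bound the Slater-point sum
      have hJ2 : ∑ i, (Q k j i + γ * g (x (s k j)) i) * (γ * g xhat i) ≤
          -(γ*ε) * ∑ i, (Q k j i + γ * g (x (s k j)) i) := by
        have h1 : ∀ i : Fin m, (Q k j i + γ * g (x (s k j)) i) * (γ * g xhat i) ≤
            (Q k j i + γ * g (x (s k j)) i) * (-(γ*ε)) := by
          intro i
          apply mul_le_mul_of_nonneg_left _ (hQg j hj1 (by omega) i)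
          have h5 := hslater i
          nlinarith
        calc ∑ i, (Q k j i + γ * g (x (s k j)) i) * (γ * g xhat i)
            ≤ ∑ i, (Q k j i + γ * g (x (s k j)) i) * (-(γ*ε)) :=
              Finset.sum_le_sum fun i _ => h1 i
          _ = -(γ*ε) * ∑ i, (Q k j i + γ * g (x (s k j)) i) := by
              rw [← Finset.sum_mul]; ring
      -- lower bound for A = ∑ (Q + γ g)
      have hAlow : Real.sqrt (∑ i, Q k j i ^ 2) - γ*G₂ ≤
          ∑ i, (Q k j i + γ * g (x (s k j)) i) := by
        have hAnn : 0 ≤ ∑ i, (Q k j i + γ * g (x (s k j)) i) :=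
          Finset.sum_nonneg fun i _ => hQg j hj1 (by omega) i
        have hsum2 : ∑ i, (Q k j i + γ * g (x (s k j)) i) ^ 2 ≤
            (∑ i, (Q k j i + γ * g (x (s k j)) i)) ^ 2 :=
          Finset.sum_sq_le_sq_sum_of_nonneg fun i _ => hQg j hj1 (by omega) i
        have hexp : ∑ i, (Q k j i + γ * g (x (s k j)) i) ^ 2
            = ∑ i, Q k j i ^ 2 + 2*(∑ i, Q k j i * (γ * g (x (s k j)) i))
              + ∑ i, (γ * g (x (s k j)) i) ^ 2 := by
          rw [Finset.mul_sum, ← Finset.sum_add_distrib, ← Finset.sum_add_distrib]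
          exact Finset.sum_congr rfl fun i _ => by ring
        have hCS2 := CS (fun i => Q k j i) (fun i => γ * g (x (s k j)) i)
        have hrnn : 0 ≤ Real.sqrt (∑ i, (γ * g (x (s k j)) i) ^ 2) := Real.sqrt_nonneg _
        have hr2 : Real.sqrt (∑ i, (γ * g (x (s k j)) i) ^ 2) ^ 2
            = ∑ i, (γ * g (x (s k j)) i) ^ 2 :=
          Real.sq_sqrt (Finset.sum_nonneg fun i _ => sq_nonneg _)
        have hrb' := hrb j hj1 (by omega)
        have hSsq : Real.sqrt (∑ i, Q k j i ^ 2) ^ 2 = ∑ i, Q k j i ^ 2 :=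
          Real.sq_sqrt (Finset.sum_nonneg fun i _ => sq_nonneg _)
        have hSnn : 0 ≤ Real.sqrt (∑ i, Q k j i ^ 2) := Real.sqrt_nonneg _
        have hX : -(Real.sqrt (∑ i, Q k j i ^ 2) *
              Real.sqrt (∑ i, (γ * g (x (s k j)) i) ^ 2)) ≤
            ∑ i, Q k j i * (γ * g (x (s k j)) i) := by
          have h3 := neg_abs_le (∑ i, Q k j i * (γ * g (x (s k j)) i))
          linarith
        rcases le_or_gt (Real.sqrt (∑ i, Q k j i ^ 2))
          (Real.sqrt (∑ i, (γ * g (x (s k j)) i) ^ 2)) with hcase | hcase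
        · linarith
        · nlinarith [hsum2, hexp, hX, hSsq, hr2, hAnn, hcase]
      -- multiply hAlow by γ ε > 0
      have h7 : γ*ε*(Real.sqrt (∑ i, Q k j i ^ 2) - γ*G₂) ≤
          γ*ε*(∑ i, (Q k j i + γ * g (x (s k j)) i)) :=
        mul_le_mul_of_nonneg_left hAlow (mul_nonneg hγ0.le hε.le)
      rw [hsplit] at hE
      nlinarith [hE, hI1, hJ1, hJ3, hI3, hcross, hJ2, h7]
    -- the uniform bound on the queue norm
    have hC0 : 0 ≤ 2*G₁ + α*G₁^2 + 2*γ^2*G₂^2 + γ^2*ε*G₂ := by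
      nlinarith [mul_nonneg hα0 (sq_nonneg G₁), sq_nonneg (γ*G₂),
        mul_nonneg (mul_nonneg (sq_nonneg γ) hε.le) hG₂, hG₁.le]
    have hγε : (0:ℝ) < γ*ε := mul_pos hγ0 hε
    have hSB : ∀ j, j ≤ (W k).card → Real.sqrt (∑ i, Q k j i ^ 2) ≤
        γ*G₂ + (2*G₁ + α*G₁^2 + 2*γ^2*G₂^2 + γ^2*ε*G₂)/(γ*ε) := by
      intro j
      induction j with
      | zero =>
        intro _
        have h0 : (∑ i, Q k 0 i ^ 2) = 0 :=
          Finset.sum_eq_zero fun i _ => by rw [hQ0 k hk i]; ring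
        rw [h0, Real.sqrt_zero]
        have h1 : 0 ≤ (2*G₁ + α*G₁^2 + 2*γ^2*G₂^2 + γ^2*ε*G₂)/(γ*ε) := div_nonneg hC0 hγε.le
        have h2 : 0 ≤ γ*G₂ := mul_nonneg hγ0.le hG₂
        linarith
      | succ j ih =>
        intro hjN
        rcases le_or_gt (Real.sqrt (∑ i, Q k j i ^ 2))
          ((2*G₁ + α*G₁^2 + 2*γ^2*G₂^2 + γ^2*ε*G₂)/(γ*ε)) with hc | hc
        · have := hSstep j hjN
          linarith
        · have hj1 : 1 ≤ j := by
            by_contra h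
            have hj0 : j = 0 := by omega
            rw [hj0] at hc
            have h0 : (∑ i, Q k 0 i ^ 2) = 0 :=
              Finset.sum_eq_zero fun i _ => by rw [hQ0 k hk i]; ring
            rw [h0, Real.sqrt_zero] at hc
            have h1 : 0 ≤ (2*G₁ + α*G₁^2 + 2*γ^2*G₂^2 + γ^2*ε*G₂)/(γ*ε) :=
              div_nonneg hC0 hγε.le
            linarith
          have hk1 := hkey j hj1 hjN
          have hd := hdrift j hjN
          have hSc : 2*G₁ + α*G₁^2 + 2*γ^2*G₂^2 + γ^2*ε*G₂ <
              γ*ε * Real.sqrt (∑ i, Q k j i ^ 2) := by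
            have := (div_lt_iff₀ hγε).1 hc
            nlinarith
          have hsqle : (∑ i, Q k (j+1) i ^ 2) ≤ ∑ i, Q k j i ^ 2 := by nlinarith
          have h9 := Real.sqrt_le_sqrt hsqle
          exact le_trans h9 (ih (by omega))
    -- telescoping sum
    have htel : ∀ J, J ≤ (W k).card →
        γ * (∑ j ∈ Finset.Icc 1 J, g (x (s k j)) i0) ≤ Q k J i0 := by
      intro J
      induction J with
      | zero => intro _; simp [hQ0 k hk i0]
      | succ J ih =>
        intro hJN
        rw [Finset.sum_Icc_succ_top (by omega), mul_add]
        have h1 := ih (by omega)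
        have h2 := hQrec J hJN i0
        have h3 := le_max_right (-(γ * g (x (s k (J+1))) i0)) (Q k J i0 + γ * g (x (s k (J+1))) i0)
        rw [← h2] at h3
        linarith
    -- sum over the window
    have hsum_eq : ∑ t ∈ W k, g (x t) i0 = ∑ j ∈ Finset.Icc 1 (W k).card, g (x (s k j)) i0 := by
      conv_lhs => rw [hsimg k hk]
      apply Finset.sum_image
      intro a ha b hb hab
      exact (hsmono k hk).injOn (Set.mem_Icc.mpr (Finset.mem_Icc.mp ha))
        (Set.mem_Icc.mpr (Finset.mem_Icc.mp hb)) hab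
    have hQN : Q k (W k).card i0 ≤ Real.sqrt (∑ i, Q k (W k).card i ^ 2) := by
      have h1 : Q k (W k).card i0 ^ 2 ≤ ∑ i, Q k (W k).card i ^ 2 :=
        Finset.single_le_sum (fun i (_ : i ∈ Finset.univ) => sq_nonneg (Q k (W k).card i))
          (Finset.mem_univ i0)
      have h2 := hQnn (W k).card le_rfl i0
      have h3 := Real.sqrt_nonneg (∑ i, Q k (W k).card i ^ 2)
      have h4 : Real.sqrt (∑ i, Q k (W k).card i ^ 2) ^ 2 = ∑ i, Q k (W k).card i ^ 2 :=
        Real.sq_sqrt (Finset.sum_nonneg fun i _ => sq_nonneg _)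
      nlinarith
    have hbound : γ * ∑ t ∈ W k, g (x t) i0 ≤
        γ*G₂ + (2*G₁ + α*G₁^2 + 2*γ^2*G₂^2 + γ^2*ε*G₂)/(γ*ε) := by
      rw [hsum_eq]
      exact le_trans (htel (W k).card le_rfl)
        (le_trans hQN (hSB (W k).card le_rfl))
    -- final algebra
    have hfinal : ∑ t ∈ W k, g (x t) i0 ≤
        (γ*G₂ + (2*G₁ + α*G₁^2 + 2*γ^2*G₂^2 + γ^2*ε*G₂)/(γ*ε))/γ := by
      rw [le_div_iff₀ hγ0, mul_comm]
      exact hbound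
    have e1 : (γ*G₂ + (2*G₁ + α*G₁^2 + 2*γ^2*G₂^2 + γ^2*ε*G₂)/(γ*ε))/γ
        = G₂ + (2*G₁ + α*G₁^2 + 2*γ^2*G₂^2 + γ^2*ε*G₂)/(γ^2*ε) := by
      field_simp
    have e2 : (2*G₁ + α*G₁^2 + 2*γ^2*G₂^2 + γ^2*ε*G₂)/(γ^2*ε)
        = 2*(G₁/(Real.sqrt T*ε)) + (1/2)*(β^2+1)*G₁^2/ε + 2*G₂^2/ε + G₂ := by
      rw [hγsq, hα]
      field_simp
    have h10 : G₁/(Real.sqrt T*ε) ≤ G₁/ε := by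
      apply div_le_div_of_nonneg_left hG₁.le hε
      nlinarith
    have eq1 : ((1/2)*(β^2+1)*G₁^2 + G₁ + 2*G₂^2)/ε
        = (1/2)*(β^2+1)*G₁^2/ε + G₁/ε + 2*G₂^2/ε := by ring
    have eq2 : G₁/(ε*Real.sqrt T) = G₁/(Real.sqrt T*ε) := by ring
    rw [e1, e2] at hfinal
    rw [eq1, eq2]
    linarith
  -- summing over the windows
  calc ∑ k ∈ Finset.Icc 1 K, ∑ t ∈ W k, g (x t) i0
      ≤ ∑ _k ∈ Finset.Icc 1 K,
          (2*G₂ + ((1/2)*(β^2+1)*G₁^2 + G₁ + 2*G₂^2)/ε + G₁/(ε*Real.sqrt T)) :=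
        Finset.sum_le_sum main
    _ = (K:ℝ) * (2*G₂ + ((1/2)*(β^2+1)*G₁^2 + G₁ + 2*G₂^2)/ε + G₁/(ε*Real.sqrt T)) := by
        rw [Finset.sum_const, Nat.card_Icc]
        simp only [Nat.add_sub_cancel, nsmul_eq_mul]
    _ = 2 * (K : ℝ) * G₂
        + (K : ℝ) * ((1 / 2) * (β ^ 2 + 1) * G₁ ^ 2 + G₁ + 2 * G₂ ^ 2) / ε
        + (K : ℝ) * G₁ / (ε * Real.sqrt T) := by ring
end
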